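/- arXiv:1305.4047 — 10 statements merged into one kernel-verified Lean document; each statement's English description precedes it below -/
import Mathlib

section
/- If the characteristic polynomial of θ, viewed as a K-linear endomorphism of L, is square-free, then for every nonzero θ-polynomial P of θ-degree t, the root-space {v ∈ L : P(v) = 0} is a K-subspace of L of dimension at most t. -/
open Polynomial

/-- Evaluation of a θ-polynomial: `P(v) = ∑ p_i θ^i(v)`. -/
noncomputable def skewEval {K L : Type*} [Field K] [Field L] [Algebra K L]
    (θ : L ≃ₐ[K] L) (p : L[X]) (v : L) : L :=
  ∑ i ∈ p.support, p.coeff i * (θ ^ i) v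

/-- The evaluation map of a θ-polynomial as a K-linear endomorphism of L. -/
noncomputable def skewEvalLinear {K L : Type*} [Field K] [Field L] [Algebra K L]
    (θ : L ≃ₐ[K] L) (p : L[X]) : L →ₗ[K] L :=
  ∑ i ∈ p.support, LinearMap.mulLeft K (p.coeff i) ∘ₗ (θ ^ i).toLinearMap

section Aux

open Module Finset

variable {K L : Type*} [Field K] [Field L] [Algebra K L]

private theorem finrank_comap_subtype_le {K V : Type*} [Field K] [AddCommGroup V] [Module K V]
    [FiniteDimensional K V] (p q : Submodule K V) :
    finrank K (q.comap p.subtype) ≤ finrank K q := by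
  let j : (q.comap p.subtype) →ₗ[K] q :=
    { toFun := fun x => ⟨x.1.1, x.2⟩
      map_add' := fun a b => rfl
      map_smul' := fun a b => rfl }
  refine LinearMap.finrank_le_finrank_of_injective (f := j) ?_
  intro a b hab
  have h0 := congrArg Subtype.val hab
  exact Subtype.ext (Subtype.ext h0)

private theorem finrank_ker_comp_le {K V : Type*} [Field K] [AddCommGroup V] [Module K V]
    [FiniteDimensional K V] (f g : V →ₗ[K] V) :
    finrank K (LinearMap.ker (f ∘ₗ g)) ≤
      finrank K (LinearMap.ker f) + finrank K (LinearMap.ker g) := by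
  classical
  set S := LinearMap.ker (f ∘ₗ g) with hS
  let g' := g.domRestrict S
  have h1 : finrank K (LinearMap.range g') + finrank K (LinearMap.ker g') = finrank K S :=
    LinearMap.finrank_range_add_finrank_ker g'
  have hr : LinearMap.range g' ≤ LinearMap.ker f := by
    rintro x ⟨⟨y, hy⟩, rfl⟩
    have : f (g y) = 0 := hy
    simpa [g', LinearMap.mem_ker] using this
  have h2 : finrank K (LinearMap.range g') ≤ finrank K (LinearMap.ker f) :=
    Submodule.finrank_mono hr
  have h3 : finrank K (LinearMap.ker g') ≤ finrank K (LinearMap.ker g) := by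
    have : LinearMap.ker g' = (LinearMap.ker g).comap S.subtype := LinearMap.ker_domRestrict S g
    rw [this]
    exact finrank_comap_subtype_le _ _
  omega

/-- Any element fixed by `θ` lies in the image of `K`, when the characteristic polynomial
of `θ` is squarefree. -/
private theorem fixed_mem_range_algebraMap [FiniteDimensional K L] (θ : L ≃ₐ[K] L)
    (hsf : Squarefree (LinearMap.charpoly θ.toLinearMap)) {x : L} (hx : θ x = x) :
    ∃ k : K, algebraMap K L k = x := by
  classical
  set n := orderOf θ with hn
  have hn0 : 0 < n := orderOf_pos θ
  set m := finrank K L with hm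
  have hm0 : 0 < m := finrank_pos
  have hXn : (X : K[X]) ^ n - 1 ≠ 0 := by
    intro h
    have := congrArg (eval 0) h
    simp [zero_pow hn0.ne'] at this
  -- charpoly divides (X^n - 1)^m
  let b := Module.finBasis K L
  let M := LinearMap.toMatrix b b θ.toLinearMap
  have hMn : M ^ n = 1 := by
    show (LinearMap.toMatrix b b) θ.toLinearMap ^ n = 1
    rw [LinearMap.toMatrix_pow, ← AlgEquiv.pow_toLinearMap, pow_orderOf_eq_one]
    rw [show (1 : L ≃ₐ[K] L).toLinearMap = LinearMap.id from rfl]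
    exact LinearMap.toMatrix_id b
  have hdvd1 : M.charpoly ∣ ((X : K[X]) ^ n - 1) ^ m := by
    have hcomm : Commute (Matrix.scalar (Fin m) (X : K[X])) ((C : K →+* K[X]).mapMatrix M) :=
      Matrix.scalar_commute _ (fun r => Commute.all _ r) _
    have hd : Matrix.charmatrix M ∣
        (Matrix.scalar (Fin m) (X : K[X])) ^ n - ((C : K →+* K[X]).mapMatrix M) ^ n :=
      hcomm.sub_dvd_pow_sub_pow n
    have e1 : (Matrix.scalar (Fin m) (X : K[X])) ^ n - ((C : K →+* K[X]).mapMatrix M) ^ n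
        = Matrix.scalar (Fin m) ((X : K[X]) ^ n - 1) := by
      rw [← map_pow, ← map_pow, hMn, map_one, map_sub, map_one]
    rw [e1] at hd
    obtain ⟨N, hN⟩ := hd
    refine ⟨N.det, ?_⟩
    have hdet := congrArg Matrix.det hN
    rw [Matrix.det_mul] at hdet
    have e2 : (Matrix.scalar (Fin m) ((X : K[X]) ^ n - 1)).det = ((X : K[X]) ^ n - 1) ^ m := by
      simp [Matrix.det_diagonal, Finset.prod_const]
    rw [e2] at hdet
    exact hdet.trans rfl
  have hdvd2 : LinearMap.charpoly θ.toLinearMap ∣ (X : K[X]) ^ n - 1 := by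
    refine (hsf.dvd_pow_iff_dvd hm0.ne').mp ?_
    have hc := LinearMap.charpoly_toMatrix θ.toLinearMap b
    rw [← hc]
    exact hdvd1
  have hmn : m ≤ n := by
    have hle := Polynomial.natDegree_le_of_dvd hdvd2 hXn
    rw [LinearMap.charpoly_natDegree] at hle
    have hdeg : ((X : K[X]) ^ n - 1).natDegree = n := by
      rw [← Polynomial.C_1, Polynomial.natDegree_X_pow_sub_C]
    omega
  -- Artin: the fixed field of ⟨θ⟩ has codimension n in L
  let H := Subgroup.zpowers θ
  have hcard : Fintype.card H = n := Fintype.card_zpowers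
  have hfix : finrank (IntermediateField.fixedField H) L = n := by
    rw [IntermediateField.finrank_fixedField_eq_card, Nat.card_eq_fintype_card, hcard]
  have htower : finrank K (IntermediateField.fixedField H) * n = m := by
    rw [← hfix]
    exact Module.finrank_mul_finrank K _ L
  have hpos : 0 < finrank K (IntermediateField.fixedField H) := finrank_pos
  have h1 : finrank K (IntermediateField.fixedField H) = 1 := by nlinarith
  have hbot : IntermediateField.fixedField H = ⊥ := IntermediateField.finrank_eq_one_iff.mp h1
  have hpowfix : ∀ j : ℕ, (θ ^ j) x = x := by
    intro j
    induction j with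
    | zero => simp
    | succ j ihj => rw [pow_succ, AlgEquiv.mul_apply, hx, ihj]
  have hzpowfix : ∀ k : ℤ, (θ ^ k) x = x := by
    intro k
    cases k with
    | ofNat j => simpa using hpowfix j
    | negSucc j =>
      rw [zpow_negSucc]
      have h := hpowfix (j + 1)
      calc (θ ^ (j + 1))⁻¹ x = (θ ^ (j + 1))⁻¹ ((θ ^ (j + 1)) x) := by rw [h]
        _ = x := AlgEquiv.symm_apply_apply _ _
  have hxF : x ∈ IntermediateField.fixedField H := by
    rintro ⟨g, hg⟩
    obtain ⟨k, rfl⟩ := Subgroup.mem_zpowers_iff.mp hg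
    exact hzpowfix k
  rw [hbot] at hxF
  obtain ⟨k, hk⟩ := IntermediateField.mem_bot.mp hxF
  exact ⟨k, hk⟩

/-- The kernel of `w ↦ θ w - c w` has dimension at most 1. -/
private theorem ker_sub_mulLeft_le_one [FiniteDimensional K L] (θ : L ≃ₐ[K] L)
    (hsf : Squarefree (LinearMap.charpoly θ.toLinearMap)) (c : L) :
    finrank K (LinearMap.ker (θ.toLinearMap - LinearMap.mulLeft K c)) ≤ 1 := by
  classical
  set D := θ.toLinearMap - LinearMap.mulLeft K c with hD
  have hDapp : ∀ w, D w = θ w - c * w := fun w => rfl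
  by_cases hW : LinearMap.ker D = ⊥
  · rw [hW, finrank_bot]
    omega
  · obtain ⟨v, hvmem, hv0⟩ := (Submodule.ne_bot_iff _).mp hW
    have hvc : θ v = c * v := by
      have h := LinearMap.mem_ker.mp hvmem
      rw [hDapp] at h
      linear_combination h
    have hc0 : c ≠ 0 := by
      rintro rfl
      rw [zero_mul] at hvc
      exact hv0 ((map_eq_zero_iff θ θ.injective).mp hvc)
    have hle : LinearMap.ker D ≤ Submodule.span K {v} := by
      intro w hw
      have hwc : θ w = c * w := by
        have h := LinearMap.mem_ker.mp hw
        rw [hDapp] at h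
        linear_combination h
      by_cases hw0 : w = 0
      · rw [hw0]; exact Submodule.zero_mem _
      have hfixed : θ (w * v⁻¹) = w * v⁻¹ := by
        rw [map_mul, map_inv₀, hwc, hvc]
        field_simp
      obtain ⟨k, hk⟩ := fixed_mem_range_algebraMap θ hsf hfixed
      have hwk : w = k • v := by
        rw [Algebra.smul_def, hk]
        field_simp
      rw [hwk]
      exact Submodule.smul_mem _ _ (Submodule.mem_span_singleton_self v)
    calc finrank K (LinearMap.ker D) ≤ finrank K (Submodule.span K ({v} : Set L)) :=
          Submodule.finrank_mono hle
      _ = 1 := finrank_span_singleton hv0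

/-- The evaluation operator of a skew polynomial given by coefficient function `pc`
truncated at degree `t`. -/
private noncomputable def Phi (θ : L ≃ₐ[K] L) (pc : ℕ → L) (t : ℕ) : L →ₗ[K] L :=
  ∑ i ∈ Finset.range (t + 1), LinearMap.mulLeft K (pc i) ∘ₗ (θ ^ i).toLinearMap

private theorem Phi_apply (θ : L ≃ₐ[K] L) (pc : ℕ → L) (t : ℕ) (w : L) :
    Phi θ pc t w = ∑ i ∈ Finset.range (t + 1), pc i * (θ ^ i) w := by
  simp [Phi, LinearMap.sum_apply]

private theorem phi_factor (θ : L ≃ₐ[K] L) (pc : ℕ → L) (c : L) (t : ℕ) (qc : ℕ → L)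
    (hqtop : qc (t + 1) = 0)
    (hrec : ∀ i ≤ t, pc (i + 1) = qc i - qc (i + 1) * (θ ^ (i + 1)) c) (w : L) :
    Phi θ pc (t + 1) w = Phi θ qc t (θ w - c * w) + (pc 0 + qc 0 * c) * w := by
  rw [Phi_apply, Phi_apply]
  have hsum : ∀ i ∈ Finset.range (t + 1), qc i * (θ ^ i) (θ w - c * w)
      = qc i * (θ ^ (i + 1)) w - qc i * (θ ^ i) c * (θ ^ i) w := by
    intro i _
    have hpow : (θ ^ i) (θ w) = (θ ^ (i + 1)) w := by
      rw [pow_succ, AlgEquiv.mul_apply]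
    rw [map_sub, map_mul, hpow]
    ring
  rw [Finset.sum_congr rfl hsum, Finset.sum_sub_distrib]
  rw [Finset.sum_range_succ' (fun i => pc i * (θ ^ i) w) (t + 1)]
  have h2 : ∀ i ∈ Finset.range (t + 1), pc (i + 1) * (θ ^ (i + 1)) w
      = qc i * (θ ^ (i + 1)) w - qc (i + 1) * (θ ^ (i + 1)) c * (θ ^ (i + 1)) w := by
    intro i hi
    rw [hrec i (Nat.lt_succ_iff.mp (Finset.mem_range.mp hi))]
    ring
  rw [Finset.sum_congr rfl h2, Finset.sum_sub_distrib]
  have h3 : ∑ i ∈ Finset.range (t + 1), qc (i + 1) * (θ ^ (i + 1)) c * (θ ^ (i + 1)) w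
      = (∑ i ∈ Finset.range (t + 1), qc i * (θ ^ i) c * (θ ^ i) w) - qc 0 * c * w := by
    have e := Finset.sum_range_succ' (fun i => qc i * (θ ^ i) c * (θ ^ i) w) (t + 1)
    have e2 := Finset.sum_range_succ (fun i => qc i * (θ ^ i) c * (θ ^ i) w) (t + 1)
    simp only [hqtop, zero_mul, add_zero, pow_zero, AlgEquiv.one_apply] at e e2
    rw [e2] at e
    rw [eq_sub_iff_add_eq]
    exact e.symm
  rw [h3]
  simp only [pow_zero, AlgEquiv.one_apply]
  ring

private theorem key_induction [FiniteDimensional K L] (θ : L ≃ₐ[K] L)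
    (hsf : Squarefree (LinearMap.charpoly θ.toLinearMap)) :
    ∀ (t : ℕ) (pc : ℕ → L), pc t ≠ 0 → finrank K (LinearMap.ker (Phi θ pc t)) ≤ t := by
  intro t
  induction t with
  | zero =>
    intro pc hpc
    have hker : LinearMap.ker (Phi θ pc 0) = ⊥ := by
      rw [LinearMap.ker_eq_bot']
      intro w hw
      rw [Phi_apply] at hw
      simp only [zero_add, Finset.sum_range_one, pow_zero, AlgEquiv.one_apply] at hw
      rcases mul_eq_zero.mp hw with h | h
      · exact absurd h hpc
      · exact h
    rw [hker, finrank_bot]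
  | succ t ih =>
    intro pc hpc
    by_cases hk : LinearMap.ker (Phi θ pc (t + 1)) = ⊥
    · rw [hk, finrank_bot]; omega
    · obtain ⟨v, hvmem, hv0⟩ := (Submodule.ne_bot_iff _).mp hk
      set c : L := θ v * v⁻¹ with hc
      have hcv : c * v = θ v := by
        rw [hc, inv_mul_cancel_right₀ hv0]
      -- the quotient coefficients, defined by downward recursion
      let r : ℕ → L := fun j =>
        Nat.rec (pc (t + 1)) (fun j rj => pc (t - j) + rj * (θ ^ (t - j)) c) j
      have hr0 : r 0 = pc (t + 1) := rfl
      have hrsucc : ∀ j, r (j + 1) = pc (t - j) + r j * (θ ^ (t - j)) c := fun j => rfl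
      let qc : ℕ → L := fun i => if i ≤ t then r (t - i) else 0
      have hqt : qc t = pc (t + 1) := by
        show (if t ≤ t then r (t - t) else 0) = pc (t + 1)
        rw [if_pos (le_refl t), Nat.sub_self, hr0]
      have hqtop : qc (t + 1) = 0 := by
        show (if t + 1 ≤ t then r (t - (t + 1)) else 0) = 0
        rw [if_neg (by omega : ¬ t + 1 ≤ t)]
      have hrec : ∀ i ≤ t, pc (i + 1) = qc i - qc (i + 1) * (θ ^ (i + 1)) c := by
        intro i hi
        rcases eq_or_lt_of_le hi with rfl | hlt
        · rw [hqt, hqtop, zero_mul, sub_zero]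
        · have h1 : t - i = (t - (i + 1)) + 1 := by omega
          have h2 : t - (t - (i + 1)) = i + 1 := by omega
          have hq1 : qc i = r (t - i) := by
            show (if i ≤ t then r (t - i) else 0) = r (t - i)
            rw [if_pos hi]
          have hq2 : qc (i + 1) = r (t - (i + 1)) := by
            show (if i + 1 ≤ t then r (t - (i + 1)) else 0) = r (t - (i + 1))
            rw [if_pos (by omega : i + 1 ≤ t)]
          rw [hq1, hq2, h1, hrsucc, h2]
          ring
      have hzero : pc 0 + qc 0 * c = 0 := by
        have h := phi_factor θ pc c t qc hqtop hrec v
        rw [LinearMap.mem_ker.mp hvmem] at h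
        rw [hcv, sub_self, map_zero, zero_add] at h
        rcases mul_eq_zero.mp h.symm with h' | h'
        · exact h'
        · exact absurd h' hv0
      have hfact : Phi θ pc (t + 1) = Phi θ qc t ∘ₗ (θ.toLinearMap - LinearMap.mulLeft K c) := by
        ext w
        have h := phi_factor θ pc c t qc hqtop hrec w
        rw [hzero, zero_mul, add_zero] at h
        simpa using h
      rw [hfact]
      have hb := finrank_ker_comp_le (Phi θ qc t) (θ.toLinearMap - LinearMap.mulLeft K c)
      have hq : finrank K (LinearMap.ker (Phi θ qc t)) ≤ t := by
        refine ih qc ?_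
        rw [hqt]; exact hpc
      have hd := ker_sub_mulLeft_le_one θ hsf c
      omega

end Aux

/-- If the characteristic polynomial of θ as a K-linear map is square-free, then the
root-space of a nonzero θ-polynomial of θ-degree t has K-dimension at most t. -/
theorem rootspace_dim_le_degree {K L : Type*} [Field K] [Field L] [Algebra K L]
    [FiniteDimensional K L] (θ : L ≃ₐ[K] L)
    (hsf : Squarefree (LinearMap.charpoly θ.toLinearMap))
    (p : L[X]) (hp : p ≠ 0) :
    Module.finrank K (LinearMap.ker (skewEvalLinear θ p)) ≤ p.natDegree := by
  classical
  have hEq : skewEvalLinear θ p = Phi θ (fun i => p.coeff i) p.natDegree := by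
    rw [skewEvalLinear, Phi]
    refine Finset.sum_subset p.supp_subset_range_natDegree_succ ?_
    intro i _ hi
    rw [Polynomial.notMem_support_iff.mp hi, LinearMap.mulLeft_zero_eq_zero,
      LinearMap.zero_comp]
  rw [hEq]
  exact key_induction θ hsf p.natDegree _
    (by simpa using Polynomial.leadingCoeff_ne_zero.mpr hp)
end

section
/- In the field extension ℚ ↪ ℚ[Y]/(Y^8+1) with α a root of Y^8+1 and θ the automorphism determined by α ↦ α^3, the θ-polynomial X^θ − X (i.e., θ(v) − v) has a root-space of K-dimension 2, generated by 1 and α^2 + α^6; in particular the root-space dimension exceeds the θ-degree. -/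
/-- In L = ℚ[Y]/(Y⁸+1) with θ(α) = α³, the root-space of the θ-polynomial X^θ − X,
i.e. the fixed space of θ, is the ℚ-span of 1 and α² + α⁶ and has ℚ-dimension 2,
exceeding the θ-degree 1. -/
theorem fixed_space_of_theta_example {L : Type*} [Field L] [Algebra ℚ L]
    (α : L) (hα : α ^ 8 = -1)
    (b : Module.Basis (Fin 8) ℚ L) (hb : ∀ i : Fin 8, b i = α ^ (i : ℕ))
    (θ : L ≃ₐ[ℚ] L) (hθ : θ α = α ^ 3) :
    LinearMap.ker (θ.toLinearMap - LinearMap.id : L →ₗ[ℚ] L) =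
      Submodule.span ℚ {1, α ^ 2 + α ^ 6} ∧
    Module.finrank ℚ (LinearMap.ker (θ.toLinearMap - LinearMap.id : L →ₗ[ℚ] L)) = 2 ∧
    1 < Module.finrank ℚ (LinearMap.ker (θ.toLinearMap - LinearMap.id : L →ₗ[ℚ] L)) := by
  have h16 : α ^ 16 = 1 := by
    have : α ^ 16 = (α ^ 8) ^ 2 := by ring
    rw [this, hα]; ring
  have hmem : ∀ v : L, v ∈ LinearMap.ker (θ.toLinearMap - LinearMap.id : L →ₗ[ℚ] L) ↔ θ v = v := by
    intro v
    simp [LinearMap.mem_ker, sub_eq_zero]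
  have hfix1 : θ (1 : L) = 1 := map_one _
  have h18 : α ^ 18 = α ^ 2 := by
    have : α ^ 18 = α ^ 16 * α ^ 2 := by ring
    rw [this, h16, one_mul]
  have hfix2 : θ (α ^ 2 + α ^ 6) = α ^ 2 + α ^ 6 := by
    rw [map_add, map_pow, map_pow, hθ, ← pow_mul, ← pow_mul]
    norm_num [h18, add_comm]
  have hker : LinearMap.ker (θ.toLinearMap - LinearMap.id : L →ₗ[ℚ] L) =
      Submodule.span ℚ {1, α ^ 2 + α ^ 6} := by
    apply le_antisymm
    · intro v hv
      rw [hmem] at hv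
      set c : Fin 8 → ℚ := fun i => b.repr v i with hc
      set d : Fin 8 → ℚ := ![c 0, -c 3, c 6, c 1, -c 4, c 7, c 2, -c 5] with hdd
      have hv' : v = ∑ i, c i • b i := (b.sum_repr v).symm
      have hθv : θ v = ∑ i, d i • b i := by
        have h9 : α ^ 9 = -α ^ 1 := by
          have : α ^ 9 = α ^ 8 * α ^ 1 := by ring
          rw [this, hα]; ring
        have h12 : α ^ 12 = -α ^ 4 := by
          have : α ^ 12 = α ^ 8 * α ^ 4 := by ring
          rw [this, hα]; ring
        have h15 : α ^ 15 = -α ^ 7 := by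
          have : α ^ 15 = α ^ 8 * α ^ 7 := by ring
          rw [this, hα]; ring
        have h21 : α ^ 21 = α ^ 5 := by
          have : α ^ 21 = α ^ 16 * α ^ 5 := by ring
          rw [this, h16, one_mul]
        have hθpow : ∀ n : ℕ, θ (α ^ n) = α ^ (3 * n) := by
          intro n; rw [map_pow, hθ, ← pow_mul, mul_comm]
        rw [hv', map_sum]
        simp only [map_smul, hb, hθpow]
        rw [Fin.sum_univ_eight, Fin.sum_univ_eight]
        show c 0 • α ^ (3 * 0) + c 1 • α ^ (3 * 1) + c 2 • α ^ (3 * 2) + c 3 • α ^ (3 * 3)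
            + c 4 • α ^ (3 * 4) + c 5 • α ^ (3 * 5) + c 6 • α ^ (3 * 6) + c 7 • α ^ (3 * 7)
          = c 0 • α ^ 0 + (-c 3) • α ^ 1 + c 6 • α ^ 2 + c 1 • α ^ 3
            + (-c 4) • α ^ 4 + c 7 • α ^ 5 + c 2 • α ^ 6 + (-c 5) • α ^ 7
        norm_num [h9, h12, h15, h18, h21]
        module
      have hrepr : ⇑(b.repr v) = d := by
        have h := hv.symm.trans hθv
        rw [h]
        exact b.repr_sum_self d
      have hcomp : ∀ i, c i = d i := fun i => congrFun hrepr i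
      have e1 : c 1 = -c 3 := hcomp 1
      have e3 : c 3 = c 1 := hcomp 3
      have e4 : c 4 = -c 4 := hcomp 4
      have e5 : c 5 = c 7 := hcomp 5
      have e7 : c 7 = -c 5 := hcomp 7
      have e6 : c 6 = c 2 := (hcomp 2).symm
      have hc1 : c 1 = 0 := by linarith
      have hc3 : c 3 = 0 := by linarith
      have hc4 : c 4 = 0 := by linarith
      have hc5 : c 5 = 0 := by linarith
      have hc7 : c 7 = 0 := by linarith
      have hvrepr : v = c 0 • (1 : L) + c 2 • (α ^ 2 + α ^ 6) := by
        rw [hv', Fin.sum_univ_eight]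
        simp only [hb, hc1, hc3, hc4, hc5, hc7, e6]
        show c 0 • α ^ 0 + (0:ℚ) • α ^ 1 + c 2 • α ^ 2 + (0:ℚ) • α ^ 3 + (0:ℚ) • α ^ 4
            + (0:ℚ) • α ^ 5 + c 2 • α ^ 6 + (0:ℚ) • α ^ 7 = c 0 • 1 + c 2 • (α ^ 2 + α ^ 6)
        simp only [pow_zero]
        module
      rw [hvrepr]
      exact Submodule.add_mem _
        (Submodule.smul_mem _ _ (Submodule.subset_span (by simp)))
        (Submodule.smul_mem _ _ (Submodule.subset_span (by simp)))
    · rw [Submodule.span_le]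
      rintro x (rfl | rfl)
      · rw [SetLike.mem_coe, hmem]; exact hfix1
      · rw [SetLike.mem_coe, hmem]; exact hfix2
  have hrepr1 : ⇑(b.repr 1) = ![1,0,0,0,0,0,0,0] := by
    have h0 : (1 : L) = ∑ i, (![1,0,0,0,0,0,0,0] : Fin 8 → ℚ) i • b i := by
      rw [Fin.sum_univ_eight]
      show (1:L) = (1:ℚ) • b 0 + (0:ℚ) • b 1 + (0:ℚ) • b 2 + (0:ℚ) • b 3 + (0:ℚ) • b 4
        + (0:ℚ) • b 5 + (0:ℚ) • b 6 + (0:ℚ) • b 7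
      simp [hb]
    rw [h0]; exact b.repr_sum_self _
  have hrepr2 : ⇑(b.repr (α ^ 2 + α ^ 6)) = ![0,0,1,0,0,0,1,0] := by
    have h0 : α ^ 2 + α ^ 6 = ∑ i, (![0,0,1,0,0,0,1,0] : Fin 8 → ℚ) i • b i := by
      rw [Fin.sum_univ_eight]
      show α ^ 2 + α ^ 6 = (0:ℚ) • b 0 + (0:ℚ) • b 1 + (1:ℚ) • b 2 + (0:ℚ) • b 3 + (0:ℚ) • b 4
        + (0:ℚ) • b 5 + (1:ℚ) • b 6 + (0:ℚ) • b 7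
      norm_num [hb 2, hb 6]
    rw [h0]; exact b.repr_sum_self _
  have hfin : Module.finrank ℚ
      (LinearMap.ker (θ.toLinearMap - LinearMap.id : L →ₗ[ℚ] L)) = 2 := by
    rw [hker]
    have hne : (1 : L) ≠ α ^ 2 + α ^ 6 := by
      intro h
      rw [h] at hrepr1
      have h10 := congrFun (hrepr1.symm.trans hrepr2) 0
      norm_num at h10
    have hli : LinearIndependent ℚ ((↑) : ({1, α ^ 2 + α ^ 6} : Set L) → L) := by
      change LinearIndepOn ℚ id ({1, α ^ 2 + α ^ 6} : Set L)
      rw [linearIndepOn_id_insert (by simpa using hne), Submodule.mem_span_singleton]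
      refine ⟨(linearIndepOn_singleton_iff (R := ℚ) (v := id)).mpr ?_, ?_⟩
      · intro h
        change α ^ 2 + α ^ 6 = 0 at h
        rw [h] at hrepr2
        have h01 : (b.repr (0:L)) 2 = (1:ℚ) := congrFun hrepr2 2
        simp at h01
      · rintro ⟨a, ha⟩
        have h1 : (b.repr (a • (α ^ 2 + α ^ 6))) 0 = (b.repr (1:L)) 0 := by rw [ha]
        have hx2 : (b.repr (α ^ 2 + α ^ 6)) 0 = 0 := congrFun hrepr2 0
        have hy : (b.repr (1:L)) 0 = 1 := congrFun hrepr1 0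
        rw [map_smul, Finsupp.smul_apply, hx2, hy] at h1
        simp at h1
    haveI : DecidableEq L := Classical.decEq L
    rw [finrank_span_set_eq_card hli]
    rw [Set.toFinset_insert, Set.toFinset_singleton]
    rw [Finset.card_insert_of_notMem (by simpa using hne), Finset.card_singleton]
  exact ⟨hker, hfin, by omega⟩
end

section
/- The characteristic polynomial of the automorphism α ↦ α^3 of ℚ[Y]/(Y^8+1), regarded as a ℚ-linear map, is Y^8 − 2Y^4 + 1 = (Y^4 − 1)^2, which is not square-free. -/
open Polynomial

namespace CharpolyThetaAux

open Matrix

noncomputable def A : Matrix (Fin 4) (Fin 4) ℚ :=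
  !![0,-1,0,0; 1,0,0,0; 0,0,0,1; 0,0,-1,0]

noncomputable def D : Matrix (Fin 4) (Fin 4) ℚ :=
  !![1,0,0,0; 0,0,0,1; 0,0,-1,0; 0,1,0,0]

noncomputable def Mb : Matrix (Fin 4 ⊕ Fin 4) (Fin 4 ⊕ Fin 4) ℚ :=
  fromBlocks A 0 0 D

def e : Fin 4 ⊕ Fin 4 ≃ Fin 8 where
  toFun := Sum.elim ![1,3,5,7] ![0,2,4,6]
  invFun := ![Sum.inr 0, Sum.inl 0, Sum.inr 1, Sum.inl 1,
              Sum.inr 2, Sum.inl 2, Sum.inr 3, Sum.inl 3]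
  left_inv := by decide
  right_inv := by decide

lemma charpoly_A : A.charpoly = (X^2+1)^2 := by
  rw [Matrix.charpoly]
  have h : charmatrix A = !![X,1,0,0; -1,X,0,0; 0,0,X,-1; 0,0,1,X] := by
    ext i j
    fin_cases i <;> fin_cases j <;>
      simp [charmatrix_apply, A, Matrix.vecHead, Matrix.vecTail]
  rw [h]
  simp [det_succ_row_zero, Fin.sum_univ_succ, Matrix.vecHead, Matrix.vecTail, Fin.succAbove]
  ring

lemma charpoly_D : D.charpoly = (X^2-1)^2 := by
  rw [Matrix.charpoly]
  have h : charmatrix D = !![X-1,0,0,0; 0,X,0,-1; 0,0,X+1,0; 0,-1,0,X] := by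
    ext i j
    fin_cases i <;> fin_cases j <;>
      simp [charmatrix_apply, D, Matrix.vecHead, Matrix.vecTail]
  rw [h]
  simp [det_succ_row_zero, Fin.sum_univ_succ, Matrix.vecHead, Matrix.vecTail, Fin.succAbove]
  ring

lemma charpoly_Mb : Mb.charpoly = (X^2+1)^2 * (X^2-1)^2 := by
  rw [Mb, Matrix.charpoly_fromBlocks_zero₂₁, charpoly_A, charpoly_D]

lemma not_unit_X4 : ¬ IsUnit ((X:ℚ[X])^4 - 1) := by
  intro h
  have hd := Polynomial.natDegree_eq_zero_of_isUnit h
  have : ((X:ℚ[X])^4 - 1).natDegree = 4 := by compute_degree!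
  omega

end CharpolyThetaAux

open CharpolyThetaAux Matrix in
/-- The characteristic polynomial of the automorphism α ↦ α³ of ℚ[Y]/(Y⁸+1), as a
ℚ-linear map, is Y⁸ − 2Y⁴ + 1 = (Y⁴ − 1)², which is not square-free. -/
theorem charpoly_of_theta_example {L : Type*} [Field L] [Algebra ℚ L]
    [FiniteDimensional ℚ L]
    (α : L) (hα : α ^ 8 = -1)
    (b : Module.Basis (Fin 8) ℚ L) (hb : ∀ i : Fin 8, b i = α ^ (i : ℕ))
    (θ : L ≃ₐ[ℚ] L) (hθ : θ α = α ^ 3) :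
    LinearMap.charpoly θ.toLinearMap = X ^ 8 - 2 * X ^ 4 + 1 ∧
    LinearMap.charpoly θ.toLinearMap = (X ^ 4 - 1) ^ 2 ∧
    ¬ Squarefree (LinearMap.charpoly θ.toLinearMap) := by
  set b' : Module.Basis (Fin 4 ⊕ Fin 4) ℚ L := b.reindex e.symm with hb'
  have hb'' : ∀ i : Fin 4 ⊕ Fin 4, b' i = b (e i) := fun i => by
    rw [hb', Module.Basis.reindex_apply, Equiv.symm_symm]
  have key : θ.toLinearMap = Matrix.toLin b' b' Mb := by
    refine b'.ext fun i => ?_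
    rw [Matrix.toLin_self, Fintype.sum_sum_type]
    rcases i with k | k <;> fin_cases k <;>
      simp [hb'', hb, Mb, A, D, Fin.sum_univ_four, e, map_pow, hθ,
        Matrix.vecHead, Matrix.vecTail,
        show ((2:Fin 8):ℕ)=2 from rfl, show ((3:Fin 8):ℕ)=3 from rfl,
        show ((4:Fin 8):ℕ)=4 from rfl, show ((5:Fin 8):ℕ)=5 from rfl,
        show ((6:Fin 8):ℕ)=6 from rfl, show ((7:Fin 8):ℕ)=7 from rfl]
    · linear_combination α * hα
    · linear_combination α^7 * hα
    · linear_combination (α^13 - α^5) * hα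
    · ring
    · linear_combination α^4 * hα
    · linear_combination (α^10 - α^2) * hα
  have hMb : LinearMap.toMatrix b' b' θ.toLinearMap = Mb := by
    rw [key, LinearMap.toMatrix_toLin]
  have hcp : LinearMap.charpoly θ.toLinearMap = (X^2+1)^2 * (X^2-1)^2 := by
    rw [← LinearMap.charpoly_toMatrix θ.toLinearMap b', hMb, charpoly_Mb]
  have hcp2 : LinearMap.charpoly θ.toLinearMap = (X ^ 4 - 1) ^ 2 := by
    rw [hcp]; ring
  refine ⟨by rw [hcp]; ring, hcp2, ?_⟩
  rw [hcp2]
  intro h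
  exact not_unit_X4 (h ((X:ℚ[X])^4 - 1) ⟨1, by ring⟩)
end

section
/- For any vector X ∈ L^N, the θ-degree of the monic generator of the left ideal I_X of θ-polynomials vanishing on all coordinates of X equals the L-rank of the n×N Moore-type matrix X^θ whose (i,j) entry is θ^{i-1}(x_j). -/
open Polynomial

lemma skewEval_eq_sum_range {K L : Type*} [Field K] [Field L] [Algebra K L]
    (θ : L ≃ₐ[K] L) (p : L[X]) (v : L) {m : ℕ} (h : p.natDegree < m) :
    skewEval θ p v = ∑ i ∈ Finset.range m, p.coeff i * (θ ^ i) v := by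
  rw [skewEval]
  refine Finset.sum_subset (fun i hi => Finset.mem_range.2
    (lt_of_le_of_lt (le_natDegree_of_mem_supp i hi) h)) ?_
  intro i _ hi
  rw [Polynomial.notMem_support_iff.1 hi, zero_mul]

/-- For X ∈ Lᴺ, the θ-degree of the generator of the left ideal I_X (a nonzero vanishing
θ-polynomial of minimal degree) equals the L-rank of the n×N Moore matrix (θ^i(x_j)). -/
theorem w0_eq_w1 {K L : Type*} [Field K] [Field L] [Algebra K L]
    (θ : L ≃ₐ[K] L) {n N : ℕ} (hnpos : 0 < n) (hn : orderOf θ = n)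
    (x : Fin N → L) (p : L[X]) (hp : p ≠ 0)
    (hvan : ∀ i, skewEval θ p (x i) = 0)
    (hmin : ∀ q : L[X], q ≠ 0 → (∀ i, skewEval θ q (x i) = 0) →
      p.natDegree ≤ q.natDegree) :
    p.natDegree = (Matrix.of fun (i : Fin n) (j : Fin N) => (θ ^ (i : ℕ)) (x j)).rank := by
  classical
  set d := p.natDegree with hd
  set r : ℕ → (Fin N → L) := fun i j => (θ ^ i) (x j) with hr
  have hθn : (θ ^ n : L ≃ₐ[K] L) = 1 := by rw [← hn]; exact pow_orderOf_eq_one θ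
  -- d ≤ n
  have hdn : d ≤ n := by
    have hq : (X ^ n - C 1 : L[X]) ≠ 0 := X_pow_sub_C_ne_zero hnpos 1
    have hqvan : ∀ i, skewEval θ (X ^ n - C 1 : L[X]) (x i) = 0 := by
      intro i
      have hdeg : (X ^ n - C 1 : L[X]).natDegree < n + 1 := by
        rw [natDegree_X_pow_sub_C]; omega
      rw [skewEval_eq_sum_range θ _ _ hdeg, Finset.sum_range_succ]
      have h0 : ∀ k ∈ Finset.range n,
          (X ^ n - C 1 : L[X]).coeff k * (θ ^ k) (x i)
            = (if k = 0 then -(x i) else 0) := by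
        intro k hk
        rw [Finset.mem_range] at hk
        rw [coeff_sub, coeff_X_pow, coeff_C]
        by_cases h : k = 0
        · subst h; simp [hnpos.ne]
        · simp [h, hk.ne]
      rw [Finset.sum_congr rfl h0, Finset.sum_ite_eq' (Finset.range n) 0,
        if_pos (Finset.mem_range.2 hnpos)]
      rw [coeff_sub, coeff_X_pow, if_pos rfl, coeff_C, if_neg hnpos.ne', hθn]
      simp
    have := hmin _ hq hqvan
    rwa [natDegree_X_pow_sub_C] at this
  -- the shifted relations
  have hθsucc : ∀ (k : ℕ) (a : L), θ ((θ ^ k) a) = (θ ^ (k + 1)) a := by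
    intro k a
    rw [pow_succ']
    rfl
  have hrel : ∀ (k : ℕ) (j : Fin N),
      ∑ i ∈ Finset.range (d + 1), (θ ^ k) (p.coeff i) * (θ ^ (i + k)) (x j) = 0 := by
    intro k
    induction k with
    | zero =>
      intro j
      have := (skewEval_eq_sum_range θ p (x j) (Nat.lt_succ_self d)).symm.trans (hvan j)
      simpa using this
    | succ k ih =>
      intro j
      have h1 := congrArg θ (ih j)
      rw [map_sum, map_zero] at h1
      rw [← h1]
      refine Finset.sum_congr rfl fun i _ => ?_
      rw [map_mul, hθsucc, hθsucc, ← Nat.add_assoc]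
  -- leading coefficient nonzero after twisting
  have hlc : ∀ k : ℕ, (θ ^ k) (p.coeff d) ≠ 0 := by
    intro k h
    exact (Polynomial.leadingCoeff_ne_zero.2 hp)
      ((θ ^ k).injective (h.trans (map_zero _).symm))
  -- every row lies in the span of the first d rows
  have hspan : ∀ i, r i ∈ Submodule.span L (Set.range fun t : Fin d => r (t : ℕ)) := by
    intro i
    induction i using Nat.strong_induction_on with
    | _ i ih =>
      by_cases hid : i < d
      · exact Submodule.subset_span ⟨⟨i, hid⟩, rfl⟩
      · obtain ⟨k, rfl⟩ : ∃ k, i = d + k := ⟨i - d, by omega⟩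
        have heq : r (d + k) = ((θ ^ k) (p.coeff d))⁻¹ •
            (- ∑ t ∈ Finset.range d, (θ ^ k) (p.coeff t) • r (t + k)) := by
          funext j
          have h0 := hrel k j
          rw [Finset.sum_range_succ] at h0
          have hc := hlc k
          simp only [Pi.smul_apply, Pi.neg_apply, Finset.sum_apply, smul_eq_mul]
          rw [eq_inv_mul_iff_mul_eq₀ hc]
          have : r (d + k) j = (θ ^ (d + k)) (x j) := rfl
          rw [this]
          rw [← neg_eq_iff_add_eq_zero] at h0
          rw [← h0]
        rw [heq]
        refine Submodule.smul_mem _ _ (Submodule.neg_mem _ (Submodule.sum_mem _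
          fun t ht => Submodule.smul_mem _ _ (ih (t + k) ?_)))
        rw [Finset.mem_range] at ht
        omega
  -- the first d rows are linearly independent
  have hindep : LinearIndependent L (fun t : Fin d => r (t : ℕ)) := by
    rw [Fintype.linearIndependent_iff]
    intro g hg
    by_contra hcon
    push_neg at hcon
    obtain ⟨t0, ht0⟩ := hcon
    set q : L[X] := ∑ t : Fin d, C (g t) * X ^ (t : ℕ) with hqdef
    have hcoeff : ∀ t : Fin d, q.coeff (t : ℕ) = g t := by
      intro t
      rw [hqdef, finset_sum_coeff]
      rw [Finset.sum_eq_single t]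
      · simp
      · intro b _ hb
        have hbt : (t : ℕ) ≠ (b : ℕ) := fun h => hb (Fin.ext h.symm)
        simp [coeff_C_mul, coeff_X_pow, hbt]
      · simp
    have hq0 : q ≠ 0 := by
      intro h
      apply ht0
      rw [← hcoeff t0, h, coeff_zero]
    have hqdeg : q.natDegree < d := by
      rw [natDegree_lt_iff_degree_lt hq0]
      refine lt_of_le_of_lt (degree_sum_le _ _) ?_
      rw [Finset.sup_lt_iff (by exact_mod_cast WithBot.bot_lt_coe d)]
      intro t _
      refine lt_of_le_of_lt (degree_C_mul_X_pow_le _ _) ?_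
      exact_mod_cast t.2
    have hqvan : ∀ j, skewEval θ q (x j) = 0 := by
      intro j
      rw [skewEval_eq_sum_range θ q (x j) hqdeg]
      have := congrFun hg j
      simp only [Finset.sum_apply, Pi.smul_apply, smul_eq_mul, Pi.zero_apply] at this
      rw [← Fin.sum_univ_eq_sum_range (fun i => q.coeff i * (θ ^ i) (x j)) d]
      rw [← this]
      exact Finset.sum_congr rfl fun t _ => by rw [hcoeff t]
    exact absurd (hmin q hq0 hqvan) (by omega)
  -- compute the rank
  have hM : (Matrix.of fun (i : Fin n) (j : Fin N) => (θ ^ (i : ℕ)) (x j)).rank = d := by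
    rw [← Matrix.rank_transpose, Matrix.rank_eq_finrank_span_cols, Matrix.col_transpose]
    change Module.finrank L (Submodule.span L (Set.range
      (Matrix.of fun (i : Fin n) (j : Fin N) => (θ ^ (i : ℕ)) (x j)))) = d
    have hsp : Submodule.span L (Set.range
          (Matrix.of fun (i : Fin n) (j : Fin N) => (θ ^ (i : ℕ)) (x j)))
        = Submodule.span L (Set.range fun t : Fin d => r (t : ℕ)) := by
      apply le_antisymm
      · rw [Submodule.span_le]
        rintro _ ⟨i, rfl⟩
        exact hspan (i : ℕ)
      · rw [Submodule.span_le]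
        rintro _ ⟨t, rfl⟩
        exact Submodule.subset_span ⟨⟨(t : ℕ), lt_of_lt_of_le t.2 hdn⟩, rfl⟩
    rw [hsp, finrank_span_eq_card hindep, Fintype.card_fin]
  rw [hM]
end

section
/- For any X ∈ L^N, the maximal number of K-linearly independent columns of the matrix X^θ = (θ^i(x_j)) equals the rank of the m×N matrix X_B of coordinates of the x_j in a K-basis B of L; i.e., w_2(X) = w_3(X). -/
/-- For X ∈ Lᴺ, the maximal number of K-linearly independent columns of the Moore matrix
X^θ = (θ^i(x_j)) (i.e. the K-dimension of the K-span of its columns) equals the rank of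
the coordinate matrix X_B ∈ K^{m×N} of the x_j in a K-basis B: w₂(X) = w₃(X). -/
theorem w2_eq_w3 {K L : Type*} [Field K] [Field L] [Algebra K L]
    (θ : L ≃ₐ[K] L) {m n N : ℕ} (b : Module.Basis (Fin m) K L)
    (hnpos : 0 < n) (hn : orderOf θ = n) (x : Fin N → L) :
    Module.finrank K (Submodule.span K
      (Set.range fun j : Fin N => fun i : Fin n => (θ ^ (i : ℕ)) (x j))) =
    (Matrix.of fun (u : Fin m) (j : Fin N) => b.repr (x j) u).rank := by
  classical
  -- the K-linear map y ↦ (i ↦ θ^i y)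
  set φ : L →ₗ[K] (Fin n → L) :=
    LinearMap.pi (fun i : Fin n => ((θ ^ (i : ℕ)).toLinearMap : L →ₗ[K] L)) with hφ
  have hφinj : Function.Injective φ := by
    intro a c h
    have := congrFun (congrArg (fun f => f) h) ⟨0, hnpos⟩
    simpa [hφ, LinearMap.pi_apply] using this
  have h1 : (Set.range fun j : Fin N => fun i : Fin n => (θ ^ (i : ℕ)) (x j)) =
      φ '' (Set.range x) := by
    rw [← Set.range_comp]
    rfl
  have h2 : Submodule.span K (φ '' (Set.range x)) =
      Submodule.map φ (Submodule.span K (Set.range x)) :=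
    (Submodule.map_span φ _).symm
  have h3 : Module.finrank K (Submodule.map φ (Submodule.span K (Set.range x))) =
      Module.finrank K (Submodule.span K (Set.range x)) :=
    (LinearEquiv.finrank_eq (Submodule.equivMapOfInjective φ hφinj _)).symm
  rw [h1, h2, h3, Matrix.rank_eq_finrank_span_cols]
  -- now compare span of x with span of columns of coordinate matrix via b.equivFun
  have h4 : (Set.range (Matrix.of fun (u : Fin m) (j : Fin N) => b.repr (x j) u).col) =
      (b.equivFun : L →ₗ[K] (Fin m → K)) '' (Set.range x) := by
    rw [← Set.range_comp]
    rfl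
  rw [h4, ← Submodule.map_span]
  have h5 := LinearEquiv.finrank_eq
    (Submodule.equivMapOfInjective (b.equivFun : L →ₗ[K] (Fin m → K))
      b.equivFun.injective (Submodule.span K (Set.range x)))
  exact h5
end

section
/- For any X ∈ L^N, the L-rank of the matrix X^θ is at most the number of K-linearly independent columns of X^θ, with equality when K equals the fixed field L^θ of θ. -/
section aux

variable {K L : Type*} [Field K] [Field L] [Algebra K L]

/-- Key cyclic property of Moore columns: applying `θ` to the entry at row `i-1`
gives the entry at row `i`. -/
lemma moore_shift (θ : L ≃ₐ[K] L) {n : ℕ} (hnpos : 0 < n) (hn : orderOf θ = n)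
    (a : L) (i : Fin n) : haveI : NeZero n := ⟨hnpos.ne'⟩
    θ ((θ ^ (((i - 1 : Fin n)) : ℕ)) a) = (θ ^ (i : ℕ)) a := by
  haveI : NeZero n := ⟨hnpos.ne'⟩
  have h1 : θ ((θ ^ (((i - 1 : Fin n)) : ℕ)) a) = (θ ^ ((((i - 1 : Fin n)) : ℕ) + 1)) a := by
    rw [pow_succ', AlgEquiv.mul_apply]
  rw [h1]
  have key : ∀ j k : Fin n, θ ^ ((j : ℕ) + (k : ℕ)) = θ ^ (((j + k : Fin n)) : ℕ) := by
    intro j k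
    rw [Fin.add_def]
    dsimp only
    have h := pow_mod_orderOf θ ((j : ℕ) + (k : ℕ))
    rw [hn] at h
    exact h.symm
  have h2 : (θ : L ≃ₐ[K] L) ^ (1 : ℕ) = θ ^ (((1 : Fin n)) : ℕ) := by
    have h := pow_mod_orderOf θ 1
    rw [hn] at h
    rw [Fin.val_one']
    exact h.symm
  have : (θ : L ≃ₐ[K] L) ^ ((((i - 1 : Fin n)) : ℕ) + 1) = θ ^ (i : ℕ) := by
    calc (θ : L ≃ₐ[K] L) ^ ((((i - 1 : Fin n)) : ℕ) + 1)
        = θ ^ (((i - 1 : Fin n)) : ℕ) * θ ^ (1 : ℕ) := by rw [pow_add]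
      _ = θ ^ (((i - 1 : Fin n)) : ℕ) * θ ^ (((1 : Fin n)) : ℕ) := by rw [h2]
      _ = θ ^ ((((i - 1 : Fin n)) : ℕ) + (((1 : Fin n)) : ℕ)) := by rw [pow_add]
      _ = θ ^ (((i - 1 + 1 : Fin n)) : ℕ) := key _ _
      _ = θ ^ (i : ℕ) := by rw [sub_add_cancel]
  rw [this]

end aux

/-- For X ∈ Lᴺ, the L-rank of the Moore matrix X^θ is at most the number of K-linearly
independent columns of X^θ (the K-dimension of the K-span of the columns), with equality
when K is the fixed field of θ. -/
theorem w1_le_w2 {K L : Type*} [Field K] [Field L] [Algebra K L]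
    (θ : L ≃ₐ[K] L) {m n N : ℕ} (hm : Module.finrank K L = m)
    (hnpos : 0 < n) (hn : orderOf θ = n) (hdvd : n ∣ m) (x : Fin N → L) :
    (Matrix.of fun (i : Fin n) (j : Fin N) => (θ ^ (i : ℕ)) (x j)).rank ≤
      Module.finrank K (Submodule.span K
        (Set.range fun j : Fin N => fun i : Fin n => (θ ^ (i : ℕ)) (x j))) ∧
    ((∀ y : L, θ y = y → y ∈ (algebraMap K L).range) →
      (Matrix.of fun (i : Fin n) (j : Fin N) => (θ ^ (i : ℕ)) (x j)).rank =
        Module.finrank K (Submodule.span K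
          (Set.range fun j : Fin N => fun i : Fin n => (θ ^ (i : ℕ)) (x j)))) := by
  classical
  haveI : NeZero n := ⟨hnpos.ne'⟩
  set c : Fin N → (Fin n → L) := fun j i => (θ ^ (i : ℕ)) (x j) with hc
  -- the rank is the finrank of the L-span of the columns
  have hrank : (Matrix.of fun (i : Fin n) (j : Fin N) => (θ ^ (i : ℕ)) (x j)).rank =
      Module.finrank L (Submodule.span L (Set.range c)) := by
    rw [Matrix.rank_eq_finrank_span_cols]
    rfl
  -- select an L-basis among the columns
  obtain ⟨s, hsub, hspan, hli⟩ := exists_linearIndependent L (Set.range c)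
  have hsfin : s.Finite := (Set.finite_range c).subset hsub
  haveI : Fintype s := hsfin.fintype
  have hliK : LinearIndependent K ((↑) : s → (Fin n → L)) :=
    hli.restrict_scalars (by
      intro a b hab
      have : algebraMap K L a = algebraMap K L b := by
        simpa [Algebra.algebraMap_eq_smul_one] using hab
      exact (algebraMap K L).injective this)
  have hcardL : Module.finrank L (Submodule.span L s) = s.toFinset.card :=
    finrank_span_set_eq_card hli
  have hcardK : Module.finrank K (Submodule.span K s) = s.toFinset.card :=
    finrank_span_set_eq_card hliK
  haveI : FiniteDimensional K (Submodule.span K (Set.range c)) :=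
    FiniteDimensional.span_of_finite K (Set.finite_range c)
  have hrank' : (Matrix.of fun (i : Fin n) (j : Fin N) => (θ ^ (i : ℕ)) (x j)).rank =
      s.toFinset.card := by rw [hrank, ← hspan, hcardL]
  constructor
  · rw [hrank', ← hcardK]
    exact Submodule.finrank_mono (Submodule.span_mono hsub)
  · -- equality when K is the fixed field
    intro hfix
    -- key: each column lies in the K-span of s
    have hshift : ∀ v ∈ Set.range c, ∀ i : Fin n, θ (v (i - 1)) = v i := by
      rintro v ⟨j, rfl⟩ i
      exact moore_shift θ hnpos hn (x j) i
    have hmemK : ∀ j, c j ∈ Submodule.span K s := by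
      intro j
      have hmemL : c j ∈ Submodule.span L s := by
        rw [hspan]; exact Submodule.subset_span ⟨j, rfl⟩
      obtain ⟨l, hlsupp, hlsum⟩ := Submodule.mem_span_set.mp hmemL
      -- the coefficients are fixed by θ
      have hfixcoef : ∀ v, θ (l v) = l v := by
        have h0 : (l.mapRange (θ : L → L) (map_zero θ) - l) ∈
            Finsupp.supported L L s := by
          rw [Finsupp.mem_supported]
          intro v hv
          have : v ∈ l.support := by
            by_contra hvn
            have h0 : l v = 0 := Finsupp.notMem_support_iff.mp hvn
            have : (l.mapRange (θ : L → L) (map_zero θ) - l) v = 0 := by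
              simp [Finsupp.mapRange_apply, h0]
            exact (Finsupp.mem_support_iff.mp hv) this
          exact hlsupp this
        have hsum2 : ((l.mapRange (θ : L → L) (map_zero θ)).sum fun v r => r • v) = c j := by
          rw [Finsupp.sum_mapRange_index (by intro v; rw [zero_smul])]
          funext i
          have h1 : (l.sum fun v r => θ r • v) i = ∑ v ∈ l.support, θ (l v) * v i := by
            rw [Finsupp.sum, Finset.sum_apply]
            rfl
          rw [h1]
          have h2 : c j i = θ (c j (i - 1)) := (hshift (c j) ⟨j, rfl⟩ i).symm
          rw [h2, ← hlsum]
          have h3 : (l.sum fun v r => r • v) (i - 1) = ∑ v ∈ l.support, l v * v (i - 1) := by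
            rw [Finsupp.sum, Finset.sum_apply]
            rfl
          rw [h3, map_sum]
          refine Finset.sum_congr rfl fun v hv => ?_
          rw [map_mul, hshift v (hsub (hlsupp hv)) i]
        have htot : (Finsupp.linearCombination L id)
            (l.mapRange (θ : L → L) (map_zero θ) - l) = 0 := by
          rw [map_sub]
          have e1 : (Finsupp.linearCombination L (id : (Fin n → L) → (Fin n → L)))
              (l.mapRange (θ : L → L) (map_zero θ)) = c j := by
            rw [Finsupp.linearCombination_apply]
            simpa using hsum2
          have e2 : (Finsupp.linearCombination L (id : (Fin n → L) → (Fin n → L))) l = c j := by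
            rw [Finsupp.linearCombination_apply]
            simpa using hlsum
          rw [e1, e2, sub_self]
        have heq := linearIndepOn_iff.mp (linearIndependent_subtype_iff.mp hli) _ h0 htot
        intro v
        have hv : (l.mapRange (θ : L → L) (map_zero θ) - l) v =
            (0 : (Fin n → L) →₀ L) v := by rw [heq]
        simp only [Finsupp.sub_apply, Finsupp.mapRange_apply, Finsupp.coe_zero,
          Pi.zero_apply] at hv
        exact sub_eq_zero.mp hv
      -- hence the combination is over K
      rw [← hlsum]
      refine Submodule.sum_mem _ fun v hv => ?_
      show l v • v ∈ Submodule.span K s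
      obtain ⟨k, hk⟩ := hfix (l v) (hfixcoef v)
      have : l v • v = k • v := by rw [← hk, algebraMap_smul]
      rw [this]
      exact Submodule.smul_mem _ _ (Submodule.subset_span (hlsupp hv))
    have hspanK : Submodule.span K (Set.range c) = Submodule.span K s := by
      apply le_antisymm
      · rw [Submodule.span_le]
        rintro _ ⟨j, rfl⟩
        exact hmemK j
      · exact Submodule.span_mono hsub
    rw [hrank']
    have : Module.finrank K (Submodule.span K
        (Set.range fun j : Fin N => fun i : Fin n => (θ ^ (i : ℕ)) (x j))) =
        Module.finrank K (Submodule.span K s) := by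
      rw [← hspanK]
    rw [this, hcardK]
end

section
/- In L = ℚ[Y]/(Y^8+1) with θ: α ↦ α^3, the vector x = (1, α, α^2, α^4, α^5, 3α^4+2) ∈ L^6 satisfies w_1(x) = rank_L(x^θ) = 4 while w_3(x) = rank_K(x_B) = 5. -/
set_option maxHeartbeats 1600000 in
/-- In L = ℚ[Y]/(Y⁸+1) with θ(α) = α³ (of order 4), the vector
x = (1, α, α², α⁴, α⁵, 3α⁴+2) ∈ L⁶ satisfies w₁(x) = rank_L(x^θ) = 4 while
w₃(x) = rank_ℚ(x_B) = 5. -/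
theorem example_ranks_differ {L : Type*} [Field L] [Algebra ℚ L]
    (α : L) (hα : α ^ 8 = -1)
    (b : Module.Basis (Fin 8) ℚ L) (hb : ∀ i : Fin 8, b i = α ^ (i : ℕ))
    (θ : L ≃ₐ[ℚ] L) (hθ : θ α = α ^ 3)
    (x : Fin 6 → L)
    (hx : x = ![1, α, α ^ 2, α ^ 4, α ^ 5, 3 * α ^ 4 + 2]) :
    (Matrix.of fun (i : Fin 4) (j : Fin 6) => (θ ^ (i : ℕ)) (x j)).rank = 4 ∧
    (Matrix.of fun (u : Fin 8) (j : Fin 6) => b.repr (x j) u).rank = 5 := by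
  constructor
  · have hchar : CharZero L := charZero_of_injective_algebraMap (algebraMap ℚ L).injective
    have hα0 : α ≠ 0 := by intro h; rw [h] at hα; norm_num at hα
    have hp : ∀ n : ℕ, θ (α ^ n) = α ^ (3 * n) := fun n => by rw [map_pow, hθ, ← pow_mul]
    have v3 : θ (α ^ 3) = -α := by
      rw [hp]; norm_num
      calc α ^ 9 = α ^ 8 * α := by ring
      _ = -α := by rw [hα]; ring
    have v4 : θ (α ^ 4) = -(α ^ 4) := by
      rw [hp]; norm_num
      calc α ^ 12 = α ^ 8 * α ^ 4 := by ring
      _ = -(α ^ 4) := by rw [hα]; ring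
    have v5 : θ (α ^ 5) = -(α ^ 7) := by
      rw [hp]; norm_num
      calc α ^ 15 = α ^ 8 * α ^ 7 := by ring
      _ = -(α ^ 7) := by rw [hα]; ring
    have v7 : θ (α ^ 7) = α ^ 5 := by
      rw [hp]; norm_num
      calc α ^ 21 = (α ^ 8) ^ 2 * α ^ 5 := by ring
      _ = α ^ 5 := by rw [hα]; ring
    have q0 : ∀ y : L, (θ ^ (0:ℕ)) y = y := fun y => rfl
    have q1 : ∀ y : L, (θ ^ (1:ℕ)) y = θ y := fun y => by rw [pow_one]
    have q2 : ∀ y : L, (θ ^ (2:ℕ)) y = θ (θ y) := fun y => by simp [pow_succ]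
    have q3 : ∀ y : L, (θ ^ (3:ℕ)) y = θ (θ (θ y)) := fun y => by simp [pow_succ]
    set M1 : Matrix (Fin 4) (Fin 6) L :=
      Matrix.of fun (i : Fin 4) (j : Fin 6) => (θ ^ (i : ℕ)) (x j) with hM1
    let S : Matrix (Fin 6) (Fin 4) L :=
      !![1,0,0,0; 0,1,0,0; 0,0,0,0; 0,0,1,0; 0,0,0,1; 0,0,0,0]
    let E : Matrix (Fin 4) (Fin 4) L :=
      !![1, α, α^4, α^5;
         1, α^3, -(α^4), -(α^7);
         1, -α, α^4, -(α^5);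
         1, -(α^3), -(α^4), α^7]
    have hMS : M1 * S = E := by
      ext i j
      fin_cases i <;> fin_cases j <;>
        simp [-map_pow, hM1, S, E, Matrix.mul_apply, Fin.sum_univ_succ, hx,
          show ((0 : Fin 4) : ℕ) = 0 from rfl, show ((1 : Fin 4) : ℕ) = 1 from rfl,
          show ((2 : Fin 4) : ℕ) = 2 from rfl, show ((3 : Fin 4) : ℕ) = 3 from rfl,
          q0, q1, q2, q3, hθ, v3, v4, v5, v7, neg_neg] <;>
        rfl
    have hdet : E.det = 16 * α ^ 4 := by
      have h4 : E.det = -16 * α ^ 12 := by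
        simp [E, Matrix.det_succ_row_zero, Fin.sum_univ_succ, Fin.succAbove,
          Fin.castSucc, Fin.castAdd, Fin.castLE, Matrix.det_fin_three]
        ring
      rw [h4]
      linear_combination (-16 * α ^ 4) * hα
    have hE : IsUnit E := by
      rw [Matrix.isUnit_iff_isUnit_det, hdet, isUnit_iff_ne_zero]
      exact mul_ne_zero (by norm_num) (pow_ne_zero _ hα0)
    have hge : 4 ≤ M1.rank := by
      have h1 : (M1 * S).rank ≤ M1.rank := Matrix.rank_mul_le_left M1 S
      rw [hMS, Matrix.rank_of_isUnit E hE, Fintype.card_fin] at h1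
      exact h1
    have hle : M1.rank ≤ 4 := by simpa using M1.rank_le_card_height
    omega
  · set M2 : Matrix (Fin 8) (Fin 6) ℚ :=
      Matrix.of fun (u : Fin 8) (j : Fin 6) => b.repr (x j) u with hM2
    have hbk : ∀ k : Fin 8, b.repr (α ^ (k : ℕ)) = Finsupp.single k 1 := fun k => by
      rw [← hb]; exact b.repr_self k
    have r0 : b.repr 1 = Finsupp.single 0 1 := by simpa using hbk 0
    have r1 : b.repr α = Finsupp.single 1 1 := by simpa using hbk 1
    have r2 : b.repr (α ^ 2) = Finsupp.single 2 1 := by simpa using hbk 2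
    have r4 : b.repr (α ^ 4) = Finsupp.single 4 1 := by simpa using hbk 4
    have r5 : b.repr (α ^ 5) = Finsupp.single 5 1 := by simpa using hbk 5
    have r7 : ∀ u, b.repr (3 * α ^ 4) u = 3 * b.repr (α ^ 4) u := by
      intro u
      have h : (3 * α ^ 4 : L) = (3 : ℚ) • α ^ 4 := by
        rw [Algebra.smul_def, map_ofNat]
      rw [h, map_smul]; simp
    have r8 : ∀ u, b.repr (2 : L) u = 2 * b.repr 1 u := by
      intro u
      have h : (2 : L) = (2 : ℚ) • (1 : L) := by
        rw [Algebra.smul_def, map_ofNat, mul_one]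
      rw [h, map_smul]; simp
    -- factorization M2 = C * D  (rank ≤ 5)
    let C : Matrix (Fin 8) (Fin 5) ℚ :=
      Matrix.of fun u i => b.repr (![1, α, α ^ 2, α ^ 4, α ^ 5] i) u
    let D : Matrix (Fin 5) (Fin 6) ℚ :=
      !![1,0,0,0,0,2;
         0,1,0,0,0,0;
         0,0,1,0,0,0;
         0,0,0,1,0,3;
         0,0,0,0,1,0]
    have hCD : M2 = C * D := by
      ext u j
      fin_cases j <;>
        simp [hM2, C, D, hx, Matrix.mul_apply, Fin.sum_univ_succ, r7, r8, mul_comm,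
          show (![1,0,0,0,0,2] : Fin 6 → ℚ) 5 = 2 from rfl,
          show (![0,1,0,0,0,0] : Fin 6 → ℚ) 5 = 0 from rfl,
          show (![0,0,1,0,0,0] : Fin 6 → ℚ) 5 = 0 from rfl,
          show (![0,0,0,1,0,3] : Fin 6 → ℚ) 5 = 3 from rfl,
          show (![0,0,0,0,1,0] : Fin 6 → ℚ) 5 = 0 from rfl,
          show (![1, α, α ^ 2, α ^ 4, α ^ 5, 3 * α ^ 4 + 2] : Fin 6 → L) 5 = 3 * α ^ 4 + 2 from rfl]
          <;> try rfl
      ring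
    -- selection: F * M2 * S = 1  (rank ≥ 5)
    let F : Matrix (Fin 5) (Fin 8) ℚ :=
      !![1,0,0,0,0,0,0,0;
         0,1,0,0,0,0,0,0;
         0,0,1,0,0,0,0,0;
         0,0,0,0,1,0,0,0;
         0,0,0,0,0,1,0,0]
    let S : Matrix (Fin 6) (Fin 5) ℚ :=
      !![1,0,0,0,0;
         0,1,0,0,0;
         0,0,1,0,0;
         0,0,0,1,0;
         0,0,0,0,1;
         0,0,0,0,0]
    have hF : ∀ (i : Fin 5) (j : Fin 6), (F * M2) i j = M2 (![0,1,2,4,5] i) j := by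
      intro i j
      fin_cases i <;> simp [F, Matrix.mul_apply, Fin.sum_univ_succ] <;> try rfl
    have hFS : F * M2 * S = (1 : Matrix (Fin 5) (Fin 5) ℚ) := by
      ext i j
      have hS : (F * M2 * S) i j = (F * M2) i (![0,1,2,3,4] j) := by
        fin_cases j <;> simp [S, Matrix.mul_apply, Fin.sum_univ_succ] <;> try rfl
      rw [hS, hF]
      fin_cases i <;> fin_cases j <;>
        simp [hM2, hx, r0, r1, r2, r4, r5, r7, r8, Finsupp.single_apply, Matrix.one_apply]
    have hge : 5 ≤ M2.rank := by
      have h1 : (F * M2 * S).rank ≤ (F * M2).rank := Matrix.rank_mul_le_left _ _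
      have h2 : (F * M2).rank ≤ M2.rank := Matrix.rank_mul_le_right _ _
      rw [hFS, Matrix.rank_one, Fintype.card_fin] at h1
      omega
    have hle : M2.rank ≤ 5 := by
      have h1 : (C * D).rank ≤ C.rank := Matrix.rank_mul_le_left _ _
      have h2 : C.rank ≤ 5 := by simpa using C.rank_le_card_width
      rw [hCD]; omega
    omega
end

section
/- Let g_1,…,g_N ∈ L be K-linearly independent and k ≤ N. The generalized Gabidulin code {(f(g_1),…,f(g_N)) : f a θ-polynomial of θ-degree < k} is an MRD code: every nonzero codeword has rank weight at least N − k + 1. -/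
open Polynomial

namespace GabidulinAux

open Module LinearMap Finset

variable {K L : Type*} [Field K] [Field L] [Algebra K L]

/-- The K-linear map `v ↦ skewEval θ f v`. -/
noncomputable def skewMap (θ : L ≃ₐ[K] L) (f : L[X]) : L →ₗ[K] L :=
  ∑ i ∈ f.support, f.coeff i • ((θ ^ i).toLinearMap)

lemma skewMap_apply (θ : L ≃ₐ[K] L) (f : L[X]) (v : L) :
    skewMap θ f v = skewEval θ f v := by
  simp [skewMap, skewEval]

lemma skewEval_eq_sum_range (θ : L ≃ₐ[K] L) (f : L[X]) {n : ℕ} (hn : f.natDegree < n) (v : L) :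
    skewEval θ f v = ∑ i ∈ Finset.range n, f.coeff i * (θ ^ i) v := by
  rw [skewEval]
  apply Finset.sum_subset
  · intro i hi
    simp only [Finset.mem_range]
    exact lt_of_le_of_lt (le_natDegree_of_mem_supp i hi) hn
  · intro i _ hi
    simp [Polynomial.notMem_support_iff.mp hi]

/-- rank-nullity bound for kernels of compositions. -/
lemma finrank_ker_comp_le {V W U : Type*} [AddCommGroup V] [Module K V] [FiniteDimensional K V]
    [AddCommGroup W] [Module K W] [FiniteDimensional K W] [AddCommGroup U] [Module K U]
    (φ : V →ₗ[K] W) (ψ : W →ₗ[K] U) :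
    finrank K (LinearMap.ker (ψ.comp φ)) ≤
      finrank K (LinearMap.ker φ) + finrank K (LinearMap.ker ψ) := by
  classical
  -- restrict φ to the kernel of the composition; it lands in ker ψ
  set χ : (LinearMap.ker (ψ.comp φ)) →ₗ[K] (LinearMap.ker ψ) :=
    LinearMap.codRestrict (LinearMap.ker ψ)
      (φ.comp (Submodule.subtype _)) (fun x => x.2) with hχ
  have h1 : finrank K (LinearMap.range χ) + finrank K (LinearMap.ker χ)
      = finrank K (LinearMap.ker (ψ.comp φ)) :=
    LinearMap.finrank_range_add_finrank_ker χ
  have h2 : finrank K (LinearMap.range χ) ≤ finrank K (LinearMap.ker ψ) :=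
    Submodule.finrank_le _
  have h3 : finrank K (LinearMap.ker χ) ≤ finrank K (LinearMap.ker φ) := by
    have hinj : Function.Injective
        (LinearMap.codRestrict (LinearMap.ker φ)
          ((Submodule.subtype _).comp (Submodule.subtype (LinearMap.ker χ)))
          (fun x => by
            have h0 : χ x.1 = 0 := LinearMap.mem_ker.mp x.2
            have h := congrArg Subtype.val h0
            simp only [hχ, LinearMap.codRestrict_apply, LinearMap.comp_apply,
              Submodule.coe_subtype, ZeroMemClass.coe_zero] at h
            exact LinearMap.mem_ker.mpr (congrArg Subtype.val h0)) :
          (LinearMap.ker χ) →ₗ[K] (LinearMap.ker φ)) := by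
      intro a b hab
      have := congrArg Subtype.val hab
      simp only [LinearMap.codRestrict_apply, LinearMap.comp_apply] at this
      exact Subtype.ext (Subtype.ext this)
    exact LinearMap.finrank_le_finrank_of_injective hinj
  omega

/-- The coefficients of the explicit quotient in skew division by `X - c`. -/
noncomputable def Hseq (θ : L ≃ₐ[K] L) (f : L[X]) (c : L) (n : ℕ) : ℕ → L
  | 0 => 0
  | (m+1) => f.coeff (n - m) + (θ ^ (n - m)) c * Hseq θ f c n m

lemma coeff_quot (a : ℕ → L) (n j : ℕ) :
    (∑ i ∈ Finset.range n, C (a i) * X ^ i).coeff j = if j < n then a j else 0 := by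
  rw [finset_sum_coeff]
  simp only [coeff_C_mul, coeff_X_pow, mul_ite, mul_one, mul_zero]
  rw [Finset.sum_ite_eq (Finset.range n) j a]
  simp

lemma ker_skewMap_const (θ : L ≃ₐ[K] L) (f : L[X]) (hf : f ≠ 0) (h0 : f.natDegree = 0) :
    LinearMap.ker (skewMap θ f) = ⊥ := by
  have hc : f.coeff 0 ≠ 0 := by
    rw [← h0]
    exact mt Polynomial.leadingCoeff_eq_zero.mp hf
  ext x
  have he : skewMap θ f x = f.coeff 0 * x := by
    rw [skewMap_apply, skewEval_eq_sum_range θ f (show f.natDegree < 1 by omega)]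
    simp
  simp only [LinearMap.mem_ker, he, Submodule.mem_bot, mul_eq_zero]
  tauto

/-- Kernel bound: a nonzero θ-polynomial has kernel of dimension at most its degree. -/
lemma finrank_ker_skewMap_le [FiniteDimensional K L] (θ : L ≃ₐ[K] L)
    (hfix : ∀ y : L, θ y = y → y ∈ (algebraMap K L).range)
    (d : ℕ) : ∀ f : L[X], f ≠ 0 → f.natDegree ≤ d →
    finrank K (LinearMap.ker (skewMap θ f)) ≤ f.natDegree := by
  induction d with
  | zero =>
    intro f hf hd
    rw [ker_skewMap_const θ f hf (Nat.le_zero.mp hd), finrank_bot]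
    exact Nat.zero_le _
  | succ d ih =>
    intro f hf hd
    by_cases hker : LinearMap.ker (skewMap θ f) = ⊥
    · rw [hker, finrank_bot]
      exact Nat.zero_le _
    obtain ⟨v, hv, hv0⟩ := (Submodule.ne_bot_iff _).mp hker
    by_cases hn0 : f.natDegree = 0
    · exact absurd (ker_skewMap_const θ f hf hn0) hker
    set n := f.natDegree with hn
    have hn1 : 1 ≤ n := Nat.one_le_iff_ne_zero.mpr hn0
    set c : L := θ v * v⁻¹ with hc
    have hcv : c * v = θ v := by
      rw [hc, mul_assoc, inv_mul_cancel₀ hv0, mul_one]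
    have hc0 : c ≠ 0 := by
      rw [hc]
      exact mul_ne_zero (by simpa using hv0) (inv_ne_zero hv0)
    clear_value c
    set g : L[X] := ∑ j ∈ Finset.range n, C (Hseq θ f c n (n - j)) * X ^ j with hgdef
    have hgco : ∀ j, g.coeff j = if j < n then Hseq θ f c n (n - j) else 0 :=
      fun j => coeff_quot _ n j
    have hfn : f.coeff n ≠ 0 := mt Polynomial.leadingCoeff_eq_zero.mp hf
    have hgne : g ≠ 0 := by
      intro h
      have := hgco (n - 1)
      rw [h] at this
      simp only [coeff_zero, if_pos (show n - 1 < n by omega)] at this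
      have e1 : n - (n - 1) = 1 := by omega
      rw [e1] at this
      simp [Hseq] at this
      exact hfn this.symm
    have hgdeg : g.natDegree < n := by
      rw [natDegree_lt_iff_degree_lt hgne]
      rw [degree_lt_iff_coeff_zero]
      intro m hm
      rw [hgco]
      have : ¬ m < n := by exact_mod_cast not_lt.mpr hm
      simp [this]
    -- telescoping identity
    have key : ∀ x : L, ∀ m, m ≤ n →
        ∑ j ∈ Finset.Ico (n - m) n,
            Hseq θ f c n (n - j) * ((θ ^ (j + 1)) x - (θ ^ j) c * (θ ^ j) x)
        = (∑ i ∈ Finset.Ico (n - m) n, f.coeff (i + 1) * (θ ^ (i + 1)) x)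
          - Hseq θ f c n m * (θ ^ (n - m)) c * (θ ^ (n - m)) x := by
      intro x m
      induction m with
      | zero => simp [Hseq]
      | succ m ihm =>
        intro hm
        have hlt : n - (m + 1) < n := by omega
        have hsucc : n - (m + 1) + 1 = n - m := by omega
        rw [Finset.sum_eq_sum_Ico_succ_bot hlt, Finset.sum_eq_sum_Ico_succ_bot hlt,
          hsucc, ihm (by omega)]
        have e1 : n - (n - (m + 1)) = m + 1 := by omega
        rw [e1]
        show Hseq θ f c n (m + 1) * _ + _ = _
        simp only [Hseq]
        ring
    -- the division identity with remainder
    have main : ∀ x : L, skewEval θ f x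
        = skewEval θ g (θ x - c * x) + (f.coeff 0 + Hseq θ f c n n * c) * x := by
      intro x
      rw [skewEval_eq_sum_range θ f (lt_add_one n) x,
        skewEval_eq_sum_range θ g hgdeg (θ x - c * x), Finset.sum_range_succ']
      have hg' : ∑ j ∈ Finset.range n, g.coeff j * (θ ^ j) (θ x - c * x)
          = ∑ j ∈ Finset.Ico 0 n,
              Hseq θ f c n (n - j) * ((θ ^ (j + 1)) x - (θ ^ j) c * (θ ^ j) x) := by
        rw [← Finset.range_eq_Ico]
        apply Finset.sum_congr rfl
        intro j hj
        rw [hgco, if_pos (Finset.mem_range.mp hj)]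
        congr 1
        rw [map_sub, map_mul, pow_succ, AlgEquiv.mul_apply]
      have hk := key x n le_rfl
      rw [Nat.sub_self, ← Finset.range_eq_Ico] at hk
      rw [← Finset.range_eq_Ico] at hg'
      rw [hg', hk]
      simp only [pow_zero, AlgEquiv.one_apply]
      ring
    -- the remainder vanishes
    have hr : f.coeff 0 + Hseq θ f c n n * c = 0 := by
      have h0 := main v
      have hv' : θ v - c * v = 0 := by rw [hcv, sub_self]
      have hz : skewEval θ g 0 = 0 := by simp [skewEval]
      rw [hv', hz, zero_add] at h0
      have hfv : skewEval θ f v = 0 := by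
        rw [← skewMap_apply]
        exact hv
      rw [hfv] at h0
      rcases mul_eq_zero.mp h0.symm with h | h
      · exact h
      · exact absurd h hv0
    -- the composition factorization
    set D : L →ₗ[K] L := θ.toLinearMap - LinearMap.mulLeft K c with hD
    have hcomp : skewMap θ f = (skewMap θ g).comp D := by
      ext x
      simp only [LinearMap.comp_apply, hD, LinearMap.sub_apply, LinearMap.mulLeft_apply,
        AlgEquiv.toLinearMap_apply]
      rw [skewMap_apply, skewMap_apply, main x, hr, zero_mul, add_zero]
    -- the kernel of D is at most one-dimensional
    have hkerD : LinearMap.ker D ≤ K ∙ v := by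
      intro w hw
      simp only [hD, LinearMap.mem_ker, LinearMap.sub_apply, LinearMap.mulLeft_apply,
        AlgEquiv.toLinearMap_apply, sub_eq_zero] at hw
      by_cases hw0 : w = 0
      · simp [hw0]
      · have hfix' : θ (w * v⁻¹) = w * v⁻¹ := by
          rw [map_mul, map_inv₀, hw, ← hcv]
          field_simp
        obtain ⟨a, ha⟩ := hfix _ hfix'
        rw [Submodule.mem_span_singleton]
        refine ⟨a, ?_⟩
        rw [Algebra.smul_def, ha]
        field_simp
    have hDrank : finrank K (LinearMap.ker D) ≤ 1 := by
      calc finrank K (LinearMap.ker D) ≤ finrank K (K ∙ v) := Submodule.finrank_mono hkerD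
        _ = 1 := finrank_span_singleton hv0
    have hgrank : finrank K (LinearMap.ker (skewMap θ g)) ≤ g.natDegree :=
      ih g hgne (by omega)
    calc finrank K (LinearMap.ker (skewMap θ f))
        = finrank K (LinearMap.ker ((skewMap θ g).comp D)) := by rw [hcomp]
      _ ≤ finrank K (LinearMap.ker D) + finrank K (LinearMap.ker (skewMap θ g)) :=
          finrank_ker_comp_le D (skewMap θ g)
      _ ≤ 1 + g.natDegree := by omega
      _ ≤ n := by omega

end GabidulinAux

/-- The generalized Gabidulin code {(f(g₁),…,f(g_N)) : deg_θ f < k} on K-linearly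
independent evaluation points is MRD: every nonzero codeword has rank weight at least
N − k + 1. -/
theorem gabidulin_is_MRD {K L : Type*} [Field K] [Field L] [Algebra K L]
    [FiniteDimensional K L] (θ : L ≃ₐ[K] L)
    (hord : orderOf θ = Module.finrank K L)
    (hsf : Squarefree (LinearMap.charpoly θ.toLinearMap))
    (hfix : ∀ y : L, θ y = y → y ∈ (algebraMap K L).range)
    {N k : ℕ} (hN : N ≤ Module.finrank K L) (hk : k ≤ N)
    (g : Fin N → L) (hg : LinearIndependent K g)
    (f : L[X]) (hdeg : f.natDegree < k)
    (hne : ∃ i, skewEval θ f (g i) ≠ 0) :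
    N - k + 1 ≤
      Module.finrank K (Submodule.span K (Set.range fun i => skewEval θ f (g i))) := by
  classical
  obtain ⟨i0, hi0⟩ := hne
  have hf : f ≠ 0 := by
    rintro rfl
    simp [skewEval] at hi0
  set φ := GabidulinAux.skewMap θ f with hφ
  set W := Submodule.span K (Set.range g) with hW
  -- the span of the codeword coordinates is the image of W under φ
  have hmap : Submodule.map φ W = Submodule.span K (Set.range fun i => skewEval θ f (g i)) := by
    rw [hW, Submodule.map_span]
    congr 1
    ext x
    simp only [Set.mem_image, Set.mem_range]
    constructor
    · rintro ⟨y, ⟨i, rfl⟩, rfl⟩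
      exact ⟨i, (GabidulinAux.skewMap_apply θ f (g i)).symm⟩
    · rintro ⟨i, rfl⟩
      exact ⟨g i, ⟨i, rfl⟩, GabidulinAux.skewMap_apply θ f (g i)⟩
  -- rank-nullity for φ restricted to W
  have h1 : Module.finrank K (LinearMap.range (φ.domRestrict W))
      + Module.finrank K (LinearMap.ker (φ.domRestrict W)) = Module.finrank K W :=
    LinearMap.finrank_range_add_finrank_ker _
  have hrange : LinearMap.range (φ.domRestrict W) = Submodule.map φ W := by
    simp
  have hWrank : Module.finrank K W = N := by
    rw [hW, finrank_span_eq_card hg, Fintype.card_fin]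
  -- the kernel of the restriction embeds into the kernel of φ
  have h2 : Module.finrank K (LinearMap.ker (φ.domRestrict W))
      ≤ Module.finrank K (LinearMap.ker φ) := by
    rw [LinearMap.ker_domRestrict]
    have : Function.Injective
        (LinearMap.codRestrict (LinearMap.ker φ)
          (W.subtype.comp (Submodule.subtype _))
          (fun x => x.2) :
          (Submodule.comap W.subtype (LinearMap.ker φ)) →ₗ[K] (LinearMap.ker φ)) := by
      intro a b hab
      have := congrArg Subtype.val hab
      exact Subtype.ext (Subtype.ext this)
    exact LinearMap.finrank_le_finrank_of_injective this
  have h3 : Module.finrank K (LinearMap.ker φ) ≤ f.natDegree :=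
    GabidulinAux.finrank_ker_skewMap_le θ hfix f.natDegree f hf le_rfl
  rw [hrange, hmap, hWrank] at h1
  omega
end

section
/- Any solution (V,f) of the Nonlinear reconstruction problem yields a solution of the Decoding problem: setting e_i = y_i − f(g_i), the error vector E = (e_1,…,e_N) has rank weight at most t. -/
open Polynomial

section AuxiliaryLemmas

open Module LinearMap

theorem charpoly_sub_one {K : Type*} [Field K] {n : Type*} [Fintype n] [DecidableEq n]
    (M : Matrix n n K) : (M - 1).charpoly = (M.charpoly).comp (X + C 1) := by
  have h : Matrix.charmatrix (M - 1) = (aeval (X + C (1:K))).toRingHom.mapMatrix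
      (Matrix.charmatrix M) := by
    ext i j
    by_cases hij : i = j
    · subst hij
      simp [Matrix.sub_apply, Matrix.one_apply]
      ring
    · simp [Matrix.charmatrix_apply_ne _ _ _ hij, Matrix.sub_apply, Matrix.one_apply_ne hij]
  rw [Matrix.charpoly, h, ← RingHom.map_det]
  simp [Matrix.charpoly, ← comp_eq_aeval]

theorem fixed_finrank_le {K L : Type*} [Field K] [Field L] [Algebra K L]
    [FiniteDimensional K L] (θ : L ≃ₐ[K] L)
    (hsf : Squarefree (LinearMap.charpoly θ.toLinearMap)) :
    Module.finrank K (LinearMap.ker (θ.toLinearMap - LinearMap.id)) ≤ 1 := by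
  set φ : Module.End K L := θ.toLinearMap - LinearMap.id with hφ
  have hc : φ.charpoly = (θ.toLinearMap.charpoly).comp (X + C 1) := by
    let b := Module.finBasis K L
    rw [← LinearMap.charpoly_toMatrix φ b, ← LinearMap.charpoly_toMatrix θ.toLinearMap b]
    rw [show LinearMap.toMatrix b b φ = LinearMap.toMatrix b b θ.toLinearMap - 1 by
      rw [hφ, map_sub, LinearMap.toMatrix_id]]
    exact charpoly_sub_one _
  -- X^2 does not divide charpoly φ
  have hX2 : ¬ (X ^ 2 ∣ φ.charpoly) := by
    rw [hc, ← X_sub_C_pow_dvd_iff]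
    intro hdvd
    have := hsf (X - C 1) (by rwa [← sq])
    exact (Polynomial.not_isUnit_X_sub_C 1) this
  have hntd : natTrailingDegree φ.charpoly ≤ 1 := by
    by_contra hlt
    push_neg at hlt
    apply hX2
    rw [X_pow_dvd_iff]
    intro d hd
    exact coeff_eq_zero_of_lt_natTrailingDegree (lt_of_lt_of_le hd hlt)
  have hker : LinearMap.ker φ ≤ φ.maxGenEigenspace 0 := by
    intro x hx
    rw [Module.End.mem_maxGenEigenspace]
    exact ⟨1, by simpa using hx⟩
  calc Module.finrank K (LinearMap.ker φ) ≤ Module.finrank K (φ.maxGenEigenspace 0) :=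
        Submodule.finrank_mono hker
    _ = natTrailingDegree φ.charpoly := LinearMap.finrank_maxGenEigenspace_zero_eq φ
    _ ≤ 1 := hntd

section Skew
variable {K L : Type*} [Field K] [Field L] [Algebra K L] [FiniteDimensional K L]

/-- The K-linear operator `v ↦ ∑_{i ≤ d} a i * θ^i v`. -/
noncomputable def skewOp (θ : L ≃ₐ[K] L) (a : ℕ → L) (d : ℕ) : L →ₗ[K] L :=
  ∑ i ∈ Finset.range (d + 1), a i • (θ ^ i).toLinearMap

lemma skewOp_apply (θ : L ≃ₐ[K] L) (a : ℕ → L) (d : ℕ) (v : L) :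
    skewOp θ a d v = ∑ i ∈ Finset.range (d + 1), a i * (θ ^ i) v := by
  simp [skewOp, smul_eq_mul]

/-- Abel-type summation identity. -/
lemma abel_sum {n : ℕ} (c t : ℕ → L) :
    ∑ j ∈ Finset.range n, (∑ i ∈ Finset.Ioc j n, c i) * (t (j + 1) - t j) =
      ∑ i ∈ Finset.range (n + 1), c i * t i -
        (∑ i ∈ Finset.range (n + 1), c i) * t 0 := by
  induction n with
  | zero => simp
  | succ n ih =>
    have hIoc : ∀ j, j ≤ n → ∑ i ∈ Finset.Ioc j (n+1), c i
        = (∑ i ∈ Finset.Ioc j n, c i) + c (n+1) := by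
      intro j hj
      exact Finset.sum_Ioc_succ_top (by omega : j ≤ n) c
    calc ∑ j ∈ Finset.range (n+1), (∑ i ∈ Finset.Ioc j (n+1), c i) * (t (j + 1) - t j)
        = ∑ j ∈ Finset.range (n+1),
            ((∑ i ∈ Finset.Ioc j n, c i) * (t (j+1) - t j) + c (n+1) * (t (j+1) - t j)) := by
          refine Finset.sum_congr rfl fun j hj => ?_
          rw [hIoc j (by simpa [Nat.lt_succ_iff] using hj), add_mul]
      _ = (∑ j ∈ Finset.range (n+1), (∑ i ∈ Finset.Ioc j n, c i) * (t (j+1) - t j))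
            + c (n+1) * ∑ j ∈ Finset.range (n+1), (t (j+1) - t j) := by
          rw [Finset.sum_add_distrib, Finset.mul_sum]
      _ = (∑ j ∈ Finset.range n, (∑ i ∈ Finset.Ioc j n, c i) * (t (j+1) - t j))
            + c (n+1) * (t (n+1) - t 0) := by
          rw [Finset.sum_range_succ, Finset.sum_range_sub (f := t)]
          simp only [Finset.Ioc_self, Finset.sum_empty, zero_mul, add_zero]
      _ = _ := by
          rw [ih, Finset.sum_range_succ (f := fun i => c i * t i) (n := n + 1),
            Finset.sum_range_succ (f := c) (n := n + 1)]
          ring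

end Skew

section Skew2
variable {K L : Type*} [Field K] [Field L] [Algebra K L] [FiniteDimensional K L]

lemma finrank_ker_comp (f g : L →ₗ[K] L) :
    Module.finrank K (LinearMap.ker (g ∘ₗ f)) ≤
      Module.finrank K (LinearMap.ker g) + Module.finrank K (LinearMap.ker f) := by
  set A := LinearMap.ker (g ∘ₗ f) with hA
  set f' := f.domRestrict A with hf'
  have hrn := LinearMap.finrank_range_add_finrank_ker f'
  have h1 : Module.finrank K (LinearMap.range f') ≤ Module.finrank K (LinearMap.ker g) := by
    apply Submodule.finrank_mono
    rintro _ ⟨x, rfl⟩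
    have hx : g (f (x : L)) = 0 := x.2
    simpa [hf', LinearMap.mem_ker] using hx
  have h2 : Module.finrank K (LinearMap.ker f') ≤ Module.finrank K (LinearMap.ker f) := by
    rw [← Submodule.finrank_map_subtype_eq A (LinearMap.ker f')]
    apply Submodule.finrank_mono
    rintro _ ⟨x, hx, rfl⟩
    have hx' : f' x = 0 := hx
    simpa [hf', LinearMap.mem_ker] using hx'
  omega

/-- Multiplication by a nonzero element as a `K`-linear equivalence of `L`. -/
noncomputable def mulLeftEquiv (u : L) (hu : u ≠ 0) : L ≃ₗ[K] L where
  toFun v := u * v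
  invFun v := u⁻¹ * v
  map_add' := mul_add u
  map_smul' c v := mul_smul_comm c u v
  left_inv v := by field_simp
  right_inv v := by field_simp

end Skew2

section Skew3
variable {K L : Type*} [Field K] [Field L] [Algebra K L] [FiniteDimensional K L]

lemma skewOp_ker_finrank_le (θ : L ≃ₐ[K] L)
    (hfix : Module.finrank K (LinearMap.ker (θ.toLinearMap - LinearMap.id)) ≤ 1) :
    ∀ (d : ℕ) (a : ℕ → L), a d ≠ 0 →
      Module.finrank K (LinearMap.ker (skewOp θ a d)) ≤ d := by
  intro d
  induction d with
  | zero =>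
    intro a ha
    have hbot : LinearMap.ker (skewOp θ a 0) = ⊥ := by
      ext v
      simp only [LinearMap.mem_ker, skewOp_apply, Finset.range_one, Finset.sum_singleton,
        pow_zero, Submodule.mem_bot]
      constructor
      · intro h
        have h' : a 0 * v = 0 := by simpa using h
        exact (mul_eq_zero.mp h').resolve_left ha
      · intro h; simp [h]
    rw [hbot]
    simp
  | succ d ih =>
    intro a ha
    by_cases hk : LinearMap.ker (skewOp θ a (d + 1)) = ⊥
    · rw [hk]; simp
    · obtain ⟨u, huker, hu0⟩ := Submodule.exists_mem_ne_zero_of_ne_bot hk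
      rw [LinearMap.mem_ker] at huker
      set a' : ℕ → L := fun i => a i * (θ ^ i) u with ha'
      have key1 : ∀ v, skewOp θ a' (d + 1) v = skewOp θ a (d + 1) (u * v) := by
        intro v
        rw [skewOp_apply, skewOp_apply]
        refine Finset.sum_congr rfl fun i _ => ?_
        rw [map_mul]
        ring
      have hker_eq : LinearMap.ker (skewOp θ a (d + 1)) =
          Submodule.map (mulLeftEquiv (K := K) u hu0 : L →ₗ[K] L)
            (LinearMap.ker (skewOp θ a' (d + 1))) := by
        ext v
        constructor
        · intro hv
          rw [LinearMap.mem_ker] at hv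
          refine ⟨u⁻¹ * v, ?_, ?_⟩
          · rw [SetLike.mem_coe, LinearMap.mem_ker, key1, ← mul_assoc,
              mul_inv_cancel₀ hu0, one_mul]
            exact hv
          · show u * (u⁻¹ * v) = v
            field_simp
        · rintro ⟨w, hw, rfl⟩
          rw [SetLike.mem_coe, LinearMap.mem_ker] at hw
          rw [LinearMap.mem_ker]
          show skewOp θ a (d + 1) (u * w) = 0
          rw [← key1]
          exact hw
      rw [hker_eq, LinearEquiv.finrank_map_eq]
      have htop : a' (d + 1) ≠ 0 := by
        refine mul_ne_zero ha fun h => hu0 ?_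
        exact (θ ^ (d + 1)).injective (by simp [h])
      have hsum0 : ∑ i ∈ Finset.range (d + 2), a' i = 0 := by
        have h1 := key1 1
        rw [mul_one, huker, skewOp_apply] at h1
        simpa [map_one] using h1
      set b : ℕ → L := fun j => ∑ i ∈ Finset.Ioc j (d + 1), a' i with hb
      have hbtop : b d ≠ 0 := by
        have : Finset.Ioc d (d + 1) = {d + 1} := by
          ext x
          simp only [Finset.mem_Ioc, Finset.mem_singleton]
          omega
        rw [hb]
        simpa [this] using htop
      have hfact : skewOp θ a' (d + 1) =
          skewOp θ b d ∘ₗ (θ.toLinearMap - LinearMap.id) := by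
        ext v
        rw [LinearMap.comp_apply]
        have hθ : (θ.toLinearMap - LinearMap.id : L →ₗ[K] L) v = θ v - v := rfl
        rw [hθ, skewOp_apply, skewOp_apply]
        have habel := abel_sum (n := d + 1) a' (fun i => (θ ^ i) v)
        rw [hsum0, zero_mul, sub_zero] at habel
        rw [← habel]
        refine Finset.sum_congr rfl fun j _ => ?_
        congr 1
        have : (θ ^ (j + 1)) v = (θ ^ j) (θ v) := by
          rw [pow_succ]
          rfl
        rw [map_sub, this]
      rw [hfact]
      calc Module.finrank K (LinearMap.ker
            (skewOp θ b d ∘ₗ (θ.toLinearMap - LinearMap.id)))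
          ≤ Module.finrank K (LinearMap.ker (skewOp θ b d)) +
              Module.finrank K (LinearMap.ker (θ.toLinearMap - LinearMap.id)) :=
            finrank_ker_comp _ _
        _ ≤ d + 1 := add_le_add (ih b hbtop) hfix

end Skew3


section MainAux
variable {K L : Type*} [Field K] [Field L] [Algebra K L] [FiniteDimensional K L]

lemma skewEval_eq_skewOp (θ : L ≃ₐ[K] L) (p : L[X]) (v : L) :
    skewEval θ p v = skewOp θ p.coeff p.natDegree v := by
  rw [skewEval, skewOp_apply]
  refine Finset.sum_subset ?_ ?_
  · exact Polynomial.supp_subset_range_natDegree_succ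
  · intro x _ hx
    rw [Polynomial.notMem_support_iff.mp hx, zero_mul]

end MainAux

end AuxiliaryLemmas

/-- Any solution (V,f) of Nonlinear reconstruction yields a solution of Decoding: the
error vector e_i = y_i − f(g_i) has rank weight (K-dimension of the span of its
coordinates) at most t. -/
theorem nonlinear_reconstruction_solves_decoding {K L : Type*} [Field K] [Field L]
    [Algebra K L] [FiniteDimensional K L] (θ : L ≃ₐ[K] L)
    (hsf : Squarefree (LinearMap.charpoly θ.toLinearMap))
    {N k t : ℕ} (g y : Fin N → L) (V f : L[X])
    (hV : V ≠ 0) (hdV : V.natDegree ≤ t) (hdf : f.natDegree < k)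
    (hsol : ∀ i, skewEval θ V (y i) = skewEval θ V (skewEval θ f (g i))) :
    Module.finrank K
      (Submodule.span K (Set.range fun i => y i - skewEval θ f (g i))) ≤ t := by
  set T := skewOp θ V.coeff V.natDegree with hT
  have hle : Submodule.span K (Set.range fun i => y i - skewEval θ f (g i)) ≤
      LinearMap.ker T := by
    rw [Submodule.span_le]
    rintro _ ⟨i, rfl⟩
    rw [SetLike.mem_coe, LinearMap.mem_ker, map_sub, ← skewEval_eq_skewOp,
      ← skewEval_eq_skewOp, hsol i, sub_self]
  have hker : Module.finrank K (LinearMap.ker T) ≤ V.natDegree := by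
    refine skewOp_ker_finrank_le θ (fixed_finrank_le θ hsf) V.natDegree V.coeff ?_
    exact Polynomial.leadingCoeff_ne_zero.mpr hV
  exact le_trans (le_trans (Submodule.finrank_mono hle) hker) hdV
end

section
/- Suppose t ≤ (N−k)/2 and the Nonlinear reconstruction problem has a solution (V,f). Then for any solution (W,N₀) of the Linearized reconstruction problem (W ≠ 0, deg_θ W ≤ t, deg_θ N₀ < k+t, W(y_i) = N₀(g_i) for all i), one has N₀ = W·f in L[X;θ]; hence (W,f) solves Nonlinear reconstruction. -/
open Polynomial

/-- Twisted multiplication of θ-polynomials. -/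
noncomputable def skewMul {K L : Type*} [Field K] [Field L] [Algebra K L]
    (θ : L ≃ₐ[K] L) (p q : L[X]) : L[X] :=
  ∑ i ∈ p.support, ∑ j ∈ q.support, C (p.coeff i * (θ ^ i) (q.coeff j)) * X ^ (i + j)

namespace SkewAux

variable {K L : Type*} [Field K] [Field L] [Algebra K L] (θ : L ≃ₐ[K] L)

lemma skewEval_eq_sum (p : L[X]) (v : L) :
    skewEval θ p v = p.sum fun i a => a * (θ ^ i) v := by
  rw [skewEval, Polynomial.sum_def]

lemma skewEval_monomial (n : ℕ) (a : L) (v : L) :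
    skewEval θ (monomial n a) v = a * (θ ^ n) v := by
  rw [skewEval_eq_sum, Polynomial.sum_monomial_index]
  simp

lemma skewEval_add (p q : L[X]) (v : L) :
    skewEval θ (p + q) v = skewEval θ p v + skewEval θ q v := by
  rw [skewEval_eq_sum, skewEval_eq_sum, skewEval_eq_sum, Polynomial.sum_add_index]
  · intro i; simp
  · intro i b c; rw [add_mul]

/-- skew evaluation at a fixed point, as an additive hom in the polynomial. -/
noncomputable def evAH (v : L) : L[X] →+ L where
  toFun p := skewEval θ p v
  map_zero' := by simp [skewEval]
  map_add' p q := skewEval_add θ p q v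

lemma skewEval_sub (p q : L[X]) (v : L) :
    skewEval θ (p - q) v = skewEval θ p v - skewEval θ q v :=
  map_sub (evAH θ v) p q

/-- skew evaluation of a fixed polynomial, as a K-linear map. -/
noncomputable def evLM (p : L[X]) : L →ₗ[K] L where
  toFun v := skewEval θ p v
  map_add' v w := by
    simp only [skewEval, map_add, mul_add, Finset.sum_add_distrib]
  map_smul' c v := by
    simp only [skewEval, RingHom.id_apply, Finset.smul_sum, Algebra.smul_def, map_mul,
      AlgEquiv.commutes]
    rw [Finset.mul_sum]
    refine Finset.sum_congr rfl fun i _ => by ring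

lemma skewEval_zero_right (p : L[X]) : skewEval θ p 0 = 0 := by
  simp [skewEval]

lemma skewEval_one (v : L) : skewEval θ (1 : L[X]) v = v := by
  have : (1 : L[X]) = monomial 0 1 := by simp
  rw [this, skewEval_monomial]; simp

lemma skewEval_X_sub_C (a v : L) : skewEval θ (X - C a) v = θ v - a * v := by
  rw [skewEval_sub]
  have h1 : (X : L[X]) = monomial 1 1 := by simp [Polynomial.X]
  have h2 : (C a : L[X]) = monomial 0 a := by simp
  rw [h1, h2, skewEval_monomial, skewEval_monomial]
  simp

lemma skewMul_def' (p q : L[X]) :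
    skewMul θ p q = p.sum fun i b => q.sum fun j c => C (b * (θ ^ i) c) * X ^ (i + j) := by
  rw [skewMul, Polynomial.sum_def]
  exact Finset.sum_congr rfl fun i _ => by rw [Polynomial.sum_def]

lemma skewMul_monomial (m j : ℕ) (b c : L) :
    skewMul θ (monomial m b) (monomial j c) = C (b * (θ ^ m) c) * X ^ (m + j) := by
  rw [skewMul_def', Polynomial.sum_monomial_index, Polynomial.sum_monomial_index]
  · simp
  · rw [Polynomial.sum_monomial_index] <;> simp

lemma skewMul_zero_right (p : L[X]) : skewMul θ p 0 = 0 := by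
  simp [skewMul]

lemma skewMul_zero_left (q : L[X]) : skewMul θ 0 q = 0 := by
  simp [skewMul]

lemma skewMul_add_right (p q r : L[X]) :
    skewMul θ p (q + r) = skewMul θ p q + skewMul θ p r := by
  rw [skewMul_def', skewMul_def', skewMul_def', Polynomial.sum_def, Polynomial.sum_def,
    Polynomial.sum_def, ← Finset.sum_add_distrib]
  refine Finset.sum_congr rfl fun i _ => ?_
  rw [Polynomial.sum_add_index]
  · intro n; simp
  · intro n b' c'; rw [map_add, mul_add, map_add, add_mul]

lemma skewMul_add_left (p q r : L[X]) :
    skewMul θ (p + q) r = skewMul θ p r + skewMul θ q r := by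
  rw [skewMul_def', skewMul_def', skewMul_def', Polynomial.sum_add_index]
  · intro n
    rw [Polynomial.sum_def]
    refine Finset.sum_eq_zero fun j _ => by simp
  · intro n b' c'
    rw [Polynomial.sum_def, Polynomial.sum_def, Polynomial.sum_def, ← Finset.sum_add_distrib]
    refine Finset.sum_congr rfl fun j _ => by rw [add_mul, map_add, add_mul]

lemma skewMul_natDegree_le (p q : L[X]) :
    (skewMul θ p q).natDegree ≤ p.natDegree + q.natDegree := by
  rw [skewMul]
  refine Polynomial.natDegree_sum_le_of_forall_le _ _ fun i hi => ?_
  refine Polynomial.natDegree_sum_le_of_forall_le _ _ fun j hj => ?_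
  refine (Polynomial.natDegree_C_mul_X_pow_le _ _).trans ?_
  exact Nat.add_le_add (Polynomial.le_natDegree_of_mem_supp i hi)
    (Polynomial.le_natDegree_of_mem_supp j hj)

lemma skewMul_coeff_top (p q : L[X]) (hp : p ≠ 0) (hq : q ≠ 0) :
    (skewMul θ p q).coeff (p.natDegree + q.natDegree)
      = p.leadingCoeff * (θ ^ p.natDegree) q.leadingCoeff := by
  rw [skewMul, Polynomial.finset_sum_coeff]
  have hmem : p.natDegree ∈ p.support := Polynomial.natDegree_mem_support_of_nonzero hp
  have hmemq : q.natDegree ∈ q.support := Polynomial.natDegree_mem_support_of_nonzero hq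
  rw [Finset.sum_eq_single p.natDegree]
  · rw [Polynomial.finset_sum_coeff, Finset.sum_eq_single q.natDegree]
    · rw [Polynomial.coeff_C_mul, Polynomial.coeff_X_pow, if_pos rfl, mul_one,
        Polynomial.leadingCoeff, Polynomial.leadingCoeff]
    · intro j hj hne
      have : j < q.natDegree := lt_of_le_of_ne (Polynomial.le_natDegree_of_mem_supp j hj) hne
      rw [Polynomial.coeff_C_mul, Polynomial.coeff_X_pow, if_neg (by omega), mul_zero]
    · intro h; exact absurd hmemq h
  · intro i hi hne
    have hilt : i < p.natDegree := lt_of_le_of_ne (Polynomial.le_natDegree_of_mem_supp i hi) hne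
    rw [Polynomial.finset_sum_coeff]
    refine Finset.sum_eq_zero fun j hj => ?_
    have : j ≤ q.natDegree := Polynomial.le_natDegree_of_mem_supp j hj
    rw [Polynomial.coeff_C_mul, Polynomial.coeff_X_pow, if_neg (by omega), mul_zero]
  · intro h; exact absurd hmem h

lemma skewMul_ne_zero {p q : L[X]} (hp : p ≠ 0) (hq : q ≠ 0) : skewMul θ p q ≠ 0 := by
  intro h
  have := skewMul_coeff_top θ p q hp hq
  rw [h, Polynomial.coeff_zero] at this
  exact (mul_ne_zero (Polynomial.leadingCoeff_ne_zero.2 hp)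
    ((map_ne_zero_iff _ (θ ^ p.natDegree).injective).2
      (Polynomial.leadingCoeff_ne_zero.2 hq))) this.symm

lemma skewMul_natDegree {p q : L[X]} (hp : p ≠ 0) (hq : q ≠ 0) :
    (skewMul θ p q).natDegree = p.natDegree + q.natDegree := by
  refine le_antisymm (skewMul_natDegree_le θ p q) ?_
  refine Polynomial.le_natDegree_of_ne_zero ?_
  rw [skewMul_coeff_top θ p q hp hq]
  exact mul_ne_zero (Polynomial.leadingCoeff_ne_zero.2 hp)
    ((map_ne_zero_iff _ (θ ^ p.natDegree).injective).2 (Polynomial.leadingCoeff_ne_zero.2 hq))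

lemma skewEval_skewMul (p q : L[X]) (v : L) :
    skewEval θ (skewMul θ p q) v = skewEval θ p (skewEval θ q v) := by
  have key : skewEval θ (skewMul θ p q) v
      = ∑ i ∈ p.support, ∑ j ∈ q.support,
          p.coeff i * (θ ^ i) (q.coeff j) * (θ ^ (i + j)) v := by
    rw [skewMul]
    rw [show skewEval θ (∑ i ∈ p.support, ∑ j ∈ q.support,
        C (p.coeff i * (θ ^ i) (q.coeff j)) * X ^ (i + j)) v
      = (evAH θ v) (∑ i ∈ p.support, ∑ j ∈ q.support,
        C (p.coeff i * (θ ^ i) (q.coeff j)) * X ^ (i + j)) from rfl]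
    rw [map_sum]
    refine Finset.sum_congr rfl fun i _ => ?_
    rw [map_sum]
    refine Finset.sum_congr rfl fun j _ => ?_
    show skewEval θ _ v = _
    rw [Polynomial.C_mul_X_pow_eq_monomial, skewEval_monomial]
  rw [key, skewEval, skewEval]
  refine Finset.sum_congr rfl fun i _ => ?_
  rw [map_sum (θ ^ i), Finset.mul_sum]
  refine Finset.sum_congr rfl fun j _ => ?_
  rw [map_mul, pow_add, AlgEquiv.mul_apply, mul_assoc]

lemma skewMul_monomial_X_sub_C (m : ℕ) (b a : L) :
    skewMul θ (monomial m b) (X - C a)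
      = C b * X ^ (m + 1) - C (b * (θ ^ m) a) * X ^ m := by
  have h1 : skewMul θ (monomial m b) X = C b * X ^ (m + 1) := by
    conv_lhs => rw [show (X : L[X]) = monomial 1 1 from by simp [Polynomial.X]]
    rw [skewMul_monomial]
    simp
  have h2 : skewMul θ (monomial m b) (C (-a)) = -(C (b * (θ ^ m) a) * X ^ m) := by
    conv_lhs => rw [show (C (-a) : L[X]) = monomial 0 (-a) from by simp]
    rw [skewMul_monomial]
    simp
  rw [sub_eq_add_neg, ← Polynomial.C_neg, skewMul_add_right, h1, h2, ← sub_eq_add_neg]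

lemma skew_div (a : L) (d : ℕ) :
    ∀ P : L[X], P.natDegree ≤ d → ∃ Q r, P = skewMul θ Q (X - C a) + C r := by
  induction d using Nat.strong_induction_on with
  | _ d ih =>
    intro P hPd
    rcases Nat.eq_zero_or_pos P.natDegree with h0 | hpos
    · exact ⟨0, P.coeff 0, by
        rw [skewMul_zero_left, zero_add]
        exact Polynomial.eq_C_of_natDegree_eq_zero h0⟩
    · set n := P.natDegree with hn
      set b := P.coeff n with hb
      set T := skewMul θ (monomial (n - 1) b) (X - C a) with hT
      have hTval : T = C b * X ^ n - C (b * (θ ^ (n - 1)) a) * X ^ (n - 1) := by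
        rw [hT, skewMul_monomial_X_sub_C, Nat.sub_add_cancel hpos]
      have hPT : (P - T).natDegree ≤ n - 1 := by
        refine Polynomial.natDegree_le_iff_coeff_eq_zero.2 fun m hm => ?_
        rcases eq_or_lt_of_le (Nat.succ_le_of_lt hm) with hmd | hmd
        · have hmd' : m = n := by omega
          subst hmd'
          rw [Polynomial.coeff_sub, hTval, Polynomial.coeff_sub, Polynomial.coeff_C_mul,
            Polynomial.coeff_C_mul, Polynomial.coeff_X_pow, Polynomial.coeff_X_pow,
            if_pos rfl, if_neg (by omega), mul_one, mul_zero, sub_zero, hb, sub_self]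
        · have hdm : n < m := by omega
          rw [Polynomial.coeff_sub,
            Polynomial.coeff_eq_zero_of_natDegree_lt hdm, hTval,
            Polynomial.coeff_sub, Polynomial.coeff_C_mul, Polynomial.coeff_C_mul,
            Polynomial.coeff_X_pow, Polynomial.coeff_X_pow, if_neg (by omega),
            if_neg (by omega), mul_zero, mul_zero, sub_self, sub_zero]
      have hd : 0 < d := lt_of_lt_of_le hpos hPd
      obtain ⟨Q', r, hQ'⟩ := ih (d - 1) (by omega) (P - T) (by omega)
      refine ⟨Q' + monomial (n - 1) b, r, ?_⟩
      rw [skewMul_add_left, ← hT, add_right_comm, ← hQ', sub_add_cancel]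

lemma skew_root_bound (hfix : ∀ z : L, θ z = z → z ∈ (algebraMap K L).range) :
    ∀ (d : ℕ) (P : L[X]), P ≠ 0 → P.natDegree = d →
    ∀ v : Fin (d + 1) → L, LinearIndependent K v →
    (∀ j, skewEval θ P (v j) = 0) → False := by
  intro d
  induction d with
  | zero =>
    intro P hP0 hPd v hv hPv
    have hc : P = C (P.coeff 0) := Polynomial.eq_C_of_natDegree_eq_zero hPd
    have h0 : P.coeff 0 ≠ 0 := fun h => hP0 (by rw [hc, h, map_zero])
    have := hPv 0
    rw [hc, show (C (P.coeff 0) : L[X]) = monomial 0 (P.coeff 0) from by simp,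
      skewEval_monomial] at this
    simp only [pow_zero] at this
    have hv0 : v 0 ≠ 0 := hv.ne_zero 0
    exact hv0 (by
      have := mul_eq_zero.1 this
      tauto)
  | succ d ih =>
    intro P hP0 hPd v hv hPv
    set u := v (Fin.last (d + 1)) with hu
    have hune : u ≠ 0 := hv.ne_zero _
    set a := θ u * u⁻¹ with ha
    have hDu : skewEval θ (X - C a) u = 0 := by
      rw [skewEval_X_sub_C, ha, mul_assoc, inv_mul_cancel₀ hune, mul_one, sub_self]
    obtain ⟨Q, r, hQr⟩ := skew_div θ a P.natDegree P le_rfl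
    have hr : r = 0 := by
      have := hPv (Fin.last (d + 1))
      rw [← hu, hQr, skewEval_add, skewEval_skewMul, hDu, skewEval_zero_right,
        zero_add, show (C r : L[X]) = monomial 0 r from by simp, skewEval_monomial] at this
      simp only [pow_zero] at this
      rcases mul_eq_zero.1 this with h | h
      · exact h
      · exact absurd h hune
    rw [hr, map_zero, add_zero] at hQr
    have hQ0 : Q ≠ 0 := by rintro rfl; rw [skewMul_zero_left] at hQr; exact hP0 hQr
    have hXC0 : (X - C a : L[X]) ≠ 0 := Polynomial.X_sub_C_ne_zero a
    have hQd : Q.natDegree = d := by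
      have := skewMul_natDegree θ hQ0 hXC0
      rw [← hQr, hPd, Polynomial.natDegree_X_sub_C] at this
      omega
    set w : Fin (d + 1) → L := fun j => skewEval θ (X - C a) (v j.castSucc) with hw
    have hQw : ∀ j, skewEval θ Q (w j) = 0 := by
      intro j
      rw [hw]
      rw [← skewEval_skewMul, ← hQr]
      exact hPv j.castSucc
    have hwli : LinearIndependent K w := by
      rw [Fintype.linearIndependent_iff]
      intro c hc
      set z := ∑ j, c j • v j.castSucc with hz
      have hDz : skewEval θ (X - C a) z = 0 := by
        have : evLM (K := K) θ (X - C a) z = ∑ j, c j • evLM (K := K) θ (X - C a) (v j.castSucc) := by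
          rw [hz, map_sum]
          exact Finset.sum_congr rfl fun j _ => (evLM (K := K) θ (X - C a)).map_smul (c j) _
        rw [show skewEval θ (X - C a) z = evLM (K := K) θ (X - C a) z from rfl, this]
        exact hc
      have hθz : θ z = a * z := by
        rw [skewEval_X_sub_C] at hDz
        exact sub_eq_zero.1 hDz
      have hθu : θ u ≠ 0 := (map_ne_zero_iff θ θ.injective).2 hune
      have hfixz : θ (z * u⁻¹) = z * u⁻¹ := by
        rw [map_mul, map_inv₀, hθz, ha]
        field_simp
      obtain ⟨c₀, hc₀⟩ := hfix _ hfixz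
      have hzu : z = c₀ • u := by
        rw [Algebra.smul_def, hc₀]
        field_simp
      set c' : Fin (d + 2) → K := Fin.snoc c (-c₀) with hc'
      have hsum : ∑ i, c' i • v i = 0 := by
        rw [Fin.sum_univ_castSucc]
        simp only [hc', Fin.snoc_castSucc, Fin.snoc_last]
        rw [← hz, ← hu, hzu, neg_smul, add_neg_cancel]
      have hall := (Fintype.linearIndependent_iff.1 hv) c' hsum
      intro j
      have := hall j.castSucc
      rwa [hc', Fin.snoc_castSucc] at this
    exact ih Q hQ0 hQd w hwli hQw

lemma exists_annihilator :
    ∀ (n : ℕ) (e : Fin n → L),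
      ∃ A : L[X], A ≠ 0 ∧ A.natDegree ≤ n ∧ ∀ i, skewEval θ A (e i) = 0 := by
  intro n
  induction n with
  | zero => exact fun e => ⟨1, one_ne_zero, by simp, fun i => i.elim0⟩
  | succ n ih =>
    intro e
    obtain ⟨A, hA0, hAd, hAe⟩ := ih fun i => e i.castSucc
    by_cases hwz : skewEval θ A (e (Fin.last n)) = 0
    · exact ⟨A, hA0, hAd.trans (Nat.le_succ n),
        fun i => Fin.lastCases hwz (fun j => hAe j) i⟩
    · set w := skewEval θ A (e (Fin.last n)) with hwdef
      have hXC0 : (X - C (θ w * w⁻¹) : L[X]) ≠ 0 := Polynomial.X_sub_C_ne_zero _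
      refine ⟨skewMul θ (X - C (θ w * w⁻¹)) A, skewMul_ne_zero θ hXC0 hA0, ?_, ?_⟩
      · refine (skewMul_natDegree_le θ _ _).trans ?_
        rw [Polynomial.natDegree_X_sub_C]
        omega
      · intro i
        refine Fin.lastCases ?_ (fun j => ?_) i
        · rw [skewEval_skewMul, ← hwdef, skewEval_X_sub_C, mul_assoc,
            inv_mul_cancel₀ hwz, mul_one, sub_self]
        · rw [skewEval_skewMul, hAe j, skewEval_zero_right]

end SkewAux

open SkewAux in
/-- If t ≤ (N−k)/2 and Nonlinear reconstruction has a solution (V,f), then any solution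
(W,N₀) of Linearized reconstruction satisfies N₀ = W·f in L[X;θ]; hence (W,f) solves
Nonlinear reconstruction. -/
theorem linearized_reconstruction_solves_nonlinear {K L : Type*} [Field K] [Field L]
    [Algebra K L] [FiniteDimensional K L] (θ : L ≃ₐ[K] L)
    (hord : orderOf θ = Module.finrank K L)
    (hsf : Squarefree (LinearMap.charpoly θ.toLinearMap))
    (hfix : ∀ z : L, θ z = z → z ∈ (algebraMap K L).range)
    {N k t : ℕ} (hN : N ≤ Module.finrank K L) (hk : k ≤ N) (ht : 2 * t ≤ N - k)
    (g y : Fin N → L) (hg : LinearIndependent K g)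
    (V f : L[X]) (hV : V ≠ 0) (hdV : V.natDegree ≤ t) (hdf : f.natDegree < k)
    (hVf : ∀ i, skewEval θ V (y i) = skewEval θ V (skewEval θ f (g i)))
    (W N₀ : L[X]) (hW : W ≠ 0) (hdW : W.natDegree ≤ t) (hdN : N₀.natDegree < k + t)
    (hWN : ∀ i, skewEval θ W (y i) = skewEval θ N₀ (g i)) :
    N₀ = skewMul θ W f ∧
    ∀ i, skewEval θ W (y i) = skewEval θ W (skewEval θ f (g i)) := by
  classical
  have hk1 : 0 < k := Nat.lt_of_le_of_lt (Nat.zero_le _) hdf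
  set e : Fin N → L := fun i => y i - skewEval θ f (g i) with he
  have hVe : ∀ i, skewEval θ V (e i) = 0 := by
    intro i
    have h1 : skewEval θ V (e i) = skewEval θ V (y i) - skewEval θ V (skewEval θ f (g i)) :=
      map_sub (evLM (K := K) θ V) _ _
    rw [h1, hVf i, sub_self]
  set κ : Submodule K L := LinearMap.ker (evLM (K := K) θ V) with hκ
  have hκt : Module.finrank K κ ≤ t := by
    by_contra hlt
    push_neg at hlt
    have hle : V.natDegree + 1 ≤ Module.finrank K κ := by omega
    obtain ⟨vv, hvv⟩ := exists_linearIndependent_of_le_finrank hle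
    have hli : LinearIndependent K (fun j => ((vv j : κ) : L)) :=
      hvv.map' κ.subtype (Submodule.ker_subtype κ)
    exact skew_root_bound θ hfix V.natDegree V hV rfl _ hli
      (fun j => LinearMap.mem_ker.1 (vv j).2)
  set E : Submodule K L := Submodule.span K (Set.range e) with hEdef
  have hE : E ≤ κ := Submodule.span_le.2 (by
    rintro _ ⟨i, rfl⟩
    exact LinearMap.mem_ker.2 (hVe i))
  have hEfr : Module.finrank K E ≤ t := le_trans (Submodule.finrank_mono hE) hκt
  set F : Submodule K L := E.map (evLM (K := K) θ W) with hFdef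
  have hFfr : Module.finrank K F ≤ t := le_trans (Submodule.finrank_map_le _ _) hEfr
  set b := Module.finBasis K F with hbdef
  obtain ⟨A, hA0, hAd, hAb⟩ :=
    exists_annihilator θ (Module.finrank K F) (fun j => ((b j : F) : L))
  have hAdt : A.natDegree ≤ t := hAd.trans hFfr
  have hAF : ∀ x : F, skewEval θ A (x : L) = 0 := by
    intro x
    have hx := congrArg F.subtype (b.sum_repr x).symm
    rw [map_sum] at hx
    simp only [map_smul] at hx
    rw [show skewEval θ A (x : L) = evLM (K := K) θ A (F.subtype x) from rfl, hx,
      map_sum (evLM (K := K) θ A)]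
    refine Finset.sum_eq_zero fun j _ => ?_
    rw [map_smul]
    rw [show evLM (K := K) θ A (F.subtype (b j)) = skewEval θ A ((b j : F) : L) from rfl,
      hAb j, smul_zero]
  set R := N₀ - skewMul θ W f with hR
  have hRg : ∀ i, skewEval θ R (g i) = skewEval θ W (e i) := by
    intro i
    rw [hR, skewEval_sub, skewEval_skewMul, ← hWN i]
    exact (map_sub (evLM (K := K) θ W) (y i) (skewEval θ f (g i))).symm
  have hWeF : ∀ i, skewEval θ W (e i) ∈ F :=
    fun i => ⟨e i, Submodule.subset_span ⟨i, rfl⟩, rfl⟩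
  have hR0 : R = 0 := by
    by_contra hRne
    have hP0 : skewMul θ A R ≠ 0 := skewMul_ne_zero θ hA0 hRne
    have hPg : ∀ i, skewEval θ (skewMul θ A R) (g i) = 0 := fun i => by
      rw [skewEval_skewMul, hRg i]
      exact hAF ⟨_, hWeF i⟩
    have hRd : R.natDegree ≤ k + t - 1 := by
      refine (Polynomial.natDegree_sub_le _ _).trans (max_le (by omega) ?_)
      refine (skewMul_natDegree_le θ _ _).trans (by omega)
    have hPd : (skewMul θ A R).natDegree + 1 ≤ N := by
      have h2 := skewMul_natDegree_le θ A R
      omega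
    have hli : LinearIndependent K
        (fun j : Fin ((skewMul θ A R).natDegree + 1) => g (Fin.castLE hPd j)) :=
      hg.comp _ (Fin.castLE_injective hPd)
    exact skew_root_bound θ hfix (skewMul θ A R).natDegree (skewMul θ A R) hP0 rfl _ hli
      (fun j => hPg _)
  have hmain : N₀ = skewMul θ W f := sub_eq_zero.1 hR0
  refine ⟨hmain, fun i => ?_⟩
  rw [hWN i, hmain, skewEval_skewMul]
end
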